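/- arXiv:1505.07547 — 7 statements merged into one kernel-verified Lean document; each statement's English description precedes it below -/
import Mathlib

section
/- Let F be a field, let S ⊆ F be a finite set, and let P ∈ F[X_1,...,X_m] be a nonzero polynomial of total degree at most d. Then the sum over all points a ∈ S^m of the multiplicity of P at a is at most d·|S|^{m-1}. -/
/-- The Hasse derivative of a multivariate polynomial `P` with respect to the index
vector `i : Fin m → ℕ`: the coefficient of `Z^i` in `P(X + Z)`. -/
noncomputable def mvHasseDeriv {F : Type*} [CommSemiring F] {m : ℕ}
    (i : Fin m → ℕ) (P : MvPolynomial (Fin m) F) : MvPolynomial (Fin m) F :=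
  MvPolynomial.coeff (Finsupp.equivFunOnFinite.symm i)
    (MvPolynomial.eval₂ (MvPolynomial.C.comp MvPolynomial.C)
      (fun k => MvPolynomial.C (MvPolynomial.X k) + MvPolynomial.X k) P)

/-- The multiplicity of `P` at a point `a`: the largest `M` (possibly `⊤`) such that
all Hasse derivatives of `P` of weight `< M` vanish at `a`. -/
noncomputable def mvMult {F : Type*} [CommSemiring F] {m : ℕ}
    (P : MvPolynomial (Fin m) F) (a : Fin m → F) : ℕ∞ :=
  sSup {M : ℕ∞ | ∀ i : Fin m → ℕ, ((∑ k, i k : ℕ) : ℕ∞) < M →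
    MvPolynomial.eval a (mvHasseDeriv i P) = 0}

open MvPolynomial Finsupp

noncomputable section MSZhelp
variable {F : Type*} [CommSemiring F] {m : ℕ}

/-- The "Taylor expansion" homomorphism `P(X) ↦ P(X + Z)` where the outer variables are `Z`. -/
def mszT' : MvPolynomial (Fin m) F →+* MvPolynomial (Fin m) (MvPolynomial (Fin m) F) :=
  MvPolynomial.eval₂Hom (MvPolynomial.C.comp MvPolynomial.C)
    (fun k => MvPolynomial.C (MvPolynomial.X k) + MvPolynomial.X k)

/-- Finsupp-indexed Hasse derivative. -/
def mszD' (i : Fin m →₀ ℕ) (P : MvPolynomial (Fin m) F) : MvPolynomial (Fin m) F :=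
  MvPolynomial.coeff i (mszT' P)

/-- Shift homomorphism `P(X) ↦ P(X + a)`. -/
def mszS' (a : Fin m → F) : MvPolynomial (Fin m) F →+* MvPolynomial (Fin m) F :=
  MvPolynomial.eval₂Hom MvPolynomial.C (fun k => MvPolynomial.X k + MvPolynomial.C (a k))

/-- weight of a monomial -/
def mszW (s : Fin m →₀ ℕ) : ℕ := s.sum fun _ e => e

/-- the weight-valuation (multivariate trailing degree) -/
def mszV (Q : MvPolynomial (Fin m) F) : ℕ∞ := Q.support.inf fun s => (mszW s : ℕ∞)

lemma mszW_eq (s : Fin m →₀ ℕ) : mszW s = ∑ k, s k := by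
  rw [mszW, Finsupp.sum_fintype]; intro; rfl

lemma mszW_add (s u : Fin m →₀ ℕ) : mszW (s + u) = mszW s + mszW u := by
  simp [mszW_eq, Finsupp.add_apply, Finset.sum_add_distrib]

lemma mszW_cons (n : ℕ) (s : Fin m →₀ ℕ) : mszW (Finsupp.cons n s) = n + mszW s :=
  Finsupp.sum_cons m s n

lemma mszW_zero : mszW (0 : Fin m →₀ ℕ) = 0 := by simp [mszW]

lemma mszD_zero (i : Fin m →₀ ℕ) : mszD' i (0 : MvPolynomial (Fin m) F) = 0 := by
  simp [mszD']

/-- The coefficient formula for the Hasse derivative. -/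
lemma mszD_coeff (i j : Fin m →₀ ℕ) (P : MvPolynomial (Fin m) F) :
    MvPolynomial.coeff j (mszD' i P)
      = (∏ k, (i k + j k).choose (i k) : ℕ) * MvPolynomial.coeff (i + j) P := by
  induction P using MvPolynomial.induction_on' with
  | add p q hp hq =>
    simp only [mszD', map_add, MvPolynomial.coeff_add] at *
    rw [hp, hq]; ring
  | monomial s c =>
    rw [mszD', mszT', coe_eval₂Hom, MvPolynomial.eval₂_monomial]
    rw [Finsupp.prod_fintype _ _ (fun _ => pow_zero _)]
    simp_rw [fun k => add_comm (MvPolynomial.C (MvPolynomial.X k) :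
      MvPolynomial (Fin m) (MvPolynomial (Fin m) F)) (MvPolynomial.X k)]
    simp_rw [add_pow]
    rw [Finset.prod_univ_sum]
    have hterm : ∀ p : Fin m → ℕ,
        ∏ k, ((MvPolynomial.X k : MvPolynomial (Fin m) (MvPolynomial (Fin m) F)) ^ p k *
          MvPolynomial.C (MvPolynomial.X k) ^ (s k - p k) *
          ((s k).choose (p k) : MvPolynomial (Fin m) (MvPolynomial (Fin m) F)))
        = MvPolynomial.monomial (Finsupp.equivFunOnFinite.symm p)
            ((∏ k, (s k).choose (p k) : ℕ) *
              MvPolynomial.monomial (s - Finsupp.equivFunOnFinite.symm p) (1 : F)) := by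
      intro p
      rw [Finset.prod_mul_distrib, Finset.prod_mul_distrib]
      have h1 : ∏ k, (MvPolynomial.X k : MvPolynomial (Fin m) (MvPolynomial (Fin m) F)) ^ p k
          = MvPolynomial.monomial (Finsupp.equivFunOnFinite.symm p)
              (1 : MvPolynomial (Fin m) F) := by
        rw [MvPolynomial.monomial_eq, Finsupp.prod_fintype _ _ (fun _ => pow_zero _)]
        simp [Finsupp.coe_equivFunOnFinite_symm]
      have h2 : ∏ k, (MvPolynomial.C (MvPolynomial.X k) :
            MvPolynomial (Fin m) (MvPolynomial (Fin m) F)) ^ (s k - p k)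
          = MvPolynomial.C
              (MvPolynomial.monomial (s - Finsupp.equivFunOnFinite.symm p) (1 : F)) := by
        simp_rw [← map_pow, ← map_prod]
        congr 1
        rw [MvPolynomial.monomial_eq, Finsupp.prod_fintype _ _ (fun _ => pow_zero _)]
        simp [Finsupp.tsub_apply, Finsupp.coe_equivFunOnFinite_symm]
      have h3 : ∏ k, ((s k).choose (p k) : MvPolynomial (Fin m) (MvPolynomial (Fin m) F))
          = ((∏ k, (s k).choose (p k) : ℕ) : MvPolynomial (Fin m) (MvPolynomial (Fin m) F)) := by
        push_cast; rfl
      rw [h1, h2, h3,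
        ← mul_one ((MvPolynomial.monomial (s - Finsupp.equivFunOnFinite.symm p)) (1 : F)),
        ← MvPolynomial.C_mul_monomial, ← MvPolynomial.C_mul_monomial, map_natCast]
      ring
    simp_rw [hterm]
    simp only [RingHom.coe_comp, Function.comp_apply]
    rw [Finset.mul_sum]
    simp_rw [MvPolynomial.C_mul_monomial]
    rw [MvPolynomial.coeff_sum]
    simp_rw [MvPolynomial.coeff_monomial]
    by_cases hle : ∀ k, i k ≤ s k
    · have hmem : ⇑i ∈ Fintype.piFinset (fun k => Finset.range (s k + 1)) := by
        simp only [Fintype.mem_piFinset, Finset.mem_range, Nat.lt_succ_iff]; exact hle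
      rw [Finset.sum_eq_single_of_mem ⇑i hmem (fun p _ hne => if_neg (fun h => hne (by
        simpa using congrArg (fun f : Fin m →₀ ℕ => ⇑f) h)))]
      rw [if_pos (by simp)]
      simp only [Finsupp.equivFunOnFinite_symm_coe]
      rw [show ((∏ k, (s k).choose (i k) : ℕ) : MvPolynomial (Fin m) F) *
            MvPolynomial.monomial (s - i) (1:F)
          = MvPolynomial.monomial (s-i) ((∏ k, (s k).choose (i k) : ℕ) : F) from by
        rw [← map_natCast (MvPolynomial.C : F →+* _), MvPolynomial.C_mul_monomial, mul_one]]
      rw [MvPolynomial.coeff_C_mul, MvPolynomial.coeff_monomial]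
      by_cases hs : s = i + j
      · have h1 : s - i = j := by ext k; simp [Finsupp.tsub_apply, hs]
        have h2 : ∀ k, (s k).choose (i k) = (i k + j k).choose (i k) := fun k => by rw [hs]; simp
        simp [h1, hs, Finset.prod_congr rfl (fun k _ => h2 k)]
        ring
      · have h1 : ¬ (s - i = j) := fun h => hs (by
          ext k
          have h2 : s k - i k = j k := by rw [← Finsupp.tsub_apply, h]
          have := hle k
          simp only [Finsupp.add_apply]
          omega)
        rw [if_neg h1, if_neg (fun h => hs h), mul_zero, mul_zero]
    · push_neg at hle
      obtain ⟨k0, hk0⟩ := hle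
      rw [Finset.sum_eq_zero, MvPolynomial.coeff_zero, if_neg, mul_zero]
      · intro h; rw [h] at hk0; simp [Finsupp.add_apply] at hk0
      · intro p hp
        rw [if_neg]
        intro h
        have : p = ⇑i := by simpa using congrArg (fun f : Fin m →₀ ℕ => ⇑f) h
        rw [this] at hp
        simp only [Fintype.mem_piFinset, Finset.mem_range, Nat.lt_succ_iff] at hp
        exact hk0.not_ge (hp k0)

lemma eval_mszD (a : Fin m → F) (i : Fin m →₀ ℕ) (P : MvPolynomial (Fin m) F) :
    MvPolynomial.eval a (mszD' i P) = MvPolynomial.coeff i (mszS' a P) := by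
  have h : (MvPolynomial.map (MvPolynomial.eval a)).comp (mszT' (F := F) (m := m)) = mszS' a := by
    apply MvPolynomial.ringHom_ext <;> intro x <;>
      simp [mszT', mszS', MvPolynomial.map_C, add_comm]
  rw [mszD', ← MvPolynomial.coeff_map, ← RingHom.comp_apply, h]

lemma mszD_mszS (a : Fin m → F) (i : Fin m →₀ ℕ) (P : MvPolynomial (Fin m) F) :
    mszD' i (mszS' a P) = mszS' a (mszD' i P) := by
  have h : (mszT' (F := F) (m := m)).comp (mszS' a)
      = (MvPolynomial.map (mszS' a)).comp mszT' := by
    apply MvPolynomial.ringHom_ext <;> intro x <;>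
      simp [mszT', mszS', MvPolynomial.map_C, MvPolynomial.C_add] <;> ring
  rw [mszD', ← RingHom.comp_apply, h, RingHom.comp_apply, MvPolynomial.coeff_map, mszD']

lemma mvHasseDeriv_eq (i : Fin m → ℕ) (P : MvPolynomial (Fin m) F) :
    mvHasseDeriv i P = mszD' (Finsupp.equivFunOnFinite.symm i) P := rfl

lemma mszV_zero : mszV (0 : MvPolynomial (Fin m) F) = ⊤ := by simp [mszV]

lemma mszV_le {Q : MvPolynomial (Fin m) F} {s : Fin m →₀ ℕ} (h : MvPolynomial.coeff s Q ≠ 0) :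
    mszV Q ≤ (mszW s : ℕ∞) :=
  Finset.inf_le (MvPolynomial.mem_support_iff.2 h)

lemma coeff_eq_zero_of_lt_mszV {Q : MvPolynomial (Fin m) F} {s : Fin m →₀ ℕ}
    (h : (mszW s : ℕ∞) < mszV Q) : MvPolynomial.coeff s Q = 0 := by
  by_contra hne; exact absurd (mszV_le hne) (not_le.2 h)

lemma exists_mszV {Q : MvPolynomial (Fin m) F} (hQ : Q ≠ 0) :
    ∃ s, MvPolynomial.coeff s Q ≠ 0 ∧ (mszW s : ℕ∞) = mszV Q := by
  obtain ⟨s, hs, hws⟩ := Finset.exists_mem_eq_inf Q.support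
    (MvPolynomial.support_nonempty.2 hQ) (fun s => (mszW s : ℕ∞))
  exact ⟨s, MvPolynomial.mem_support_iff.1 hs, hws.symm⟩

lemma mszV_le_totalDegree {Q : MvPolynomial (Fin m) F} (hQ : Q ≠ 0) :
    mszV Q ≤ (Q.totalDegree : ℕ∞) := by
  obtain ⟨s, hs, hws⟩ := exists_mszV hQ
  rw [← hws, Nat.cast_le]
  exact MvPolynomial.le_totalDegree (MvPolynomial.mem_support_iff.2 hs)

lemma mszV_le_add_mszD (i : Fin m →₀ ℕ) (Q : MvPolynomial (Fin m) F) :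
    mszV Q ≤ (mszW i : ℕ∞) + mszV (mszD' i Q) := by
  by_cases hd : mszD' i Q = 0
  · rw [hd, mszV_zero, add_top]; exact le_top
  · obtain ⟨s, hs, hws⟩ := exists_mszV hd
    rw [← hws, ← Nat.cast_add, ← mszW_add]
    refine mszV_le (fun h0 => hs ?_)
    rw [mszD_coeff, h0, mul_zero]

lemma mvMult_eq (P : MvPolynomial (Fin m) F) (a : Fin m → F) :
    mvMult P a = mszV (mszS' a P) := by
  unfold mvMult
  apply le_antisymm
  · apply sSup_le
    intro M hM
    by_contra hlt
    push_neg at hlt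
    have hQ : mszS' a P ≠ 0 := by
      intro h0
      rw [h0, mszV_zero] at hlt
      exact absurd le_top (not_le.2 hlt)
    obtain ⟨s, hs, hws⟩ := exists_mszV hQ
    refine hs ?_
    have := hM ⇑s (by
      rw [show ((∑ k, s k : ℕ) : ℕ∞) = (mszW s : ℕ∞) by rw [mszW_eq], hws]; exact hlt)
    rwa [mvHasseDeriv_eq, Finsupp.equivFunOnFinite_symm_coe, eval_mszD] at this
  · apply le_sSup
    intro i hi
    rw [mvHasseDeriv_eq, eval_mszD]
    apply coeff_eq_zero_of_lt_mszV
    convert hi using 2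
    rw [mszW_eq]
    simp

lemma mszD_finSuccEquiv (i : Fin m →₀ ℕ) (n : ℕ) (P : MvPolynomial (Fin (m+1)) F) :
    ((MvPolynomial.finSuccEquiv F m (mszD' (Finsupp.cons 0 i) P)).coeff n)
      = mszD' i ((MvPolynomial.finSuccEquiv F m P).coeff n) := by
  apply MvPolynomial.ext; intro s
  rw [MvPolynomial.finSuccEquiv_coeff_coeff, mszD_coeff, mszD_coeff,
    MvPolynomial.finSuccEquiv_coeff_coeff]
  have hc : Finsupp.cons 0 i + Finsupp.cons n s = Finsupp.cons n (i + s) := by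
    ext k
    refine Fin.cases ?_ ?_ k <;>
      simp [Finsupp.cons_zero, Finsupp.cons_succ, Finsupp.add_apply]
  rw [hc]
  congr 1
  rw [Fin.prod_univ_succ]
  simp [Finsupp.cons_zero, Finsupp.cons_succ]

lemma taylor_comm (b : F) (a' : Fin m → F) (Q : MvPolynomial (Fin (m+1)) F) :
    Polynomial.taylor b (Polynomial.map (MvPolynomial.eval a')
        (MvPolynomial.finSuccEquiv F m Q))
      = Polynomial.map (MvPolynomial.eval (0 : Fin m → F))
          (MvPolynomial.finSuccEquiv F m (mszS' (Fin.cons b a') Q)) := by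
  have h : ((Polynomial.taylorAlgHom b).toRingHom.comp
        ((Polynomial.mapRingHom (MvPolynomial.eval a')).comp
          (MvPolynomial.finSuccEquiv F m :
            MvPolynomial (Fin (m+1)) F →+* Polynomial (MvPolynomial (Fin m) F))))
      = ((Polynomial.mapRingHom (MvPolynomial.eval (0 : Fin m → F))).comp
          ((MvPolynomial.finSuccEquiv F m :
            MvPolynomial (Fin (m+1)) F →+* Polynomial (MvPolynomial (Fin m) F)).comp
            (mszS' (Fin.cons b a')))) := by
    apply MvPolynomial.ringHom_ext
    · intro r
      simp [mszS', Polynomial.coe_taylorAlgHom, MvPolynomial.finSuccEquiv_apply, Polynomial.taylor_C]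
    · intro k
      refine Fin.cases ?_ ?_ k
      · simp [mszS', Polynomial.coe_taylorAlgHom, MvPolynomial.finSuccEquiv_X_zero,
          MvPolynomial.finSuccEquiv_apply, Polynomial.taylor_X, Polynomial.taylor_C]
      · intro k'
        simp [mszS', Polynomial.coe_taylorAlgHom, MvPolynomial.finSuccEquiv_X_succ,
          MvPolynomial.finSuccEquiv_apply, Polynomial.taylor_C]
  have := DFunLike.congr_fun h Q
  simpa using this

lemma coeff_map_eval0 (n : ℕ) (R : MvPolynomial (Fin (m+1)) F) :
    (Polynomial.map (MvPolynomial.eval (0 : Fin m → F))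
        (MvPolynomial.finSuccEquiv F m R)).coeff n
      = MvPolynomial.coeff (Finsupp.cons n 0) R := by
  rw [Polynomial.coeff_map, MvPolynomial.eval_zero, MvPolynomial.constantCoeff_eq,
    MvPolynomial.finSuccEquiv_coeff_coeff]

lemma msz_td_fin0 (Q : MvPolynomial (Fin 0) F) : Q.totalDegree = 0 := by
  refine Nat.le_zero.1 (Finset.sup_le fun s _ => ?_)
  have hs : s = 0 := by ext k; exact k.elim0
  simp [hs]

end MSZhelp

noncomputable section MSZfield

lemma mszS_ne_zero {F : Type*} [CommRing F] {m : ℕ} (a : Fin m → F)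
    {P : MvPolynomial (Fin m) F} (hP : P ≠ 0) : mszS' a P ≠ 0 := by
  have h : (mszS' (-a)).comp (mszS' a) = RingHom.id (MvPolynomial (Fin m) F) := by
    apply MvPolynomial.ringHom_ext <;> intro x <;> simp [mszS']
  intro h0
  apply hP
  have := DFunLike.congr_fun h P
  rw [RingHom.comp_apply, h0, map_zero] at this
  exact this.symm ▸ rfl

lemma ntd_taylor_le_rootMultiplicity {F : Type*} [Field F] (b : F) {q : Polynomial F}
    (hq : q ≠ 0) : (Polynomial.taylor b q).natTrailingDegree ≤ q.rootMultiplicity b := by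
  rw [Polynomial.le_rootMultiplicity_iff hq]
  have hX : Polynomial.X ^ (Polynomial.taylor b q).natTrailingDegree ∣ Polynomial.taylor b q :=
    Polynomial.X_pow_dvd_iff.2 (fun d hd => Polynomial.coeff_eq_zero_of_lt_natTrailingDegree hd)
  obtain ⟨r, hr⟩ := hX
  have h1 : q = Polynomial.taylor (-b) (Polynomial.taylor b q) := by
    rw [Polynomial.taylor_taylor, neg_add_cancel, Polynomial.taylor_zero]
  have h2 : Polynomial.taylor (-b)
        (Polynomial.X ^ (Polynomial.taylor b q).natTrailingDegree)
      = (Polynomial.X - Polynomial.C b) ^ (Polynomial.taylor b q).natTrailingDegree := by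
    rw [Polynomial.taylor_apply, Polynomial.pow_comp, Polynomial.X_comp, map_neg,
      ← sub_eq_add_neg]
  refine ⟨Polynomial.taylor (-b) r, ?_⟩
  conv_lhs => rw [h1, hr]
  rw [Polynomial.taylor_mul, h2]

lemma sum_rootMultiplicity_le {F : Type*} [Field F] (S : Finset F) (q : Polynomial F) :
    ∑ b ∈ S, q.rootMultiplicity b ≤ q.natDegree := by
  classical
  have h1 : ∀ b ∈ S, q.rootMultiplicity b = q.roots.count b := fun b _ =>
    (Polynomial.count_roots q).symm
  rw [Finset.sum_congr rfl h1]
  have h2 : ∑ b ∈ S, q.roots.count b ≤ ∑ b ∈ S ∪ q.roots.toFinset, q.roots.count b :=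
    Finset.sum_le_sum_of_subset Finset.subset_union_left
  have h3 : ∑ b ∈ S ∪ q.roots.toFinset, q.roots.count b
      = ∑ b ∈ q.roots.toFinset, q.roots.count b := by
    refine (Finset.sum_subset Finset.subset_union_right ?_).symm
    intro x _ hx
    rw [Multiset.count_eq_zero]
    intro hmem
    exact hx (Multiset.mem_toFinset.2 hmem)
  calc ∑ b ∈ S, q.roots.count b ≤ ∑ b ∈ q.roots.toFinset, q.roots.count b := h2.trans h3.le
    _ = Multiset.card q.roots := q.roots.toFinset_sum_count_eq
    _ ≤ q.natDegree := q.card_roots'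

lemma sum_piFinset_succ {F M : Type*} [AddCommMonoid M] {m : ℕ} (S : Finset F)
    (f : (Fin (m+1) → F) → M) :
    ∑ a ∈ Fintype.piFinset (fun _ : Fin (m+1) => S), f a
      = ∑ b ∈ S, ∑ a' ∈ Fintype.piFinset (fun _ : Fin m => S), f (Fin.cons b a') := by
  classical
  rw [← Finset.sum_product']
  refine Finset.sum_nbij' (fun a => (a 0, Fin.tail a)) (fun p => Fin.cons p.1 p.2) ?_ ?_ ?_ ?_ ?_
  · intro a ha
    simp only [Fintype.mem_piFinset] at ha
    simp only [Finset.mem_product, Fintype.mem_piFinset]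
    exact ⟨ha 0, fun k => ha k.succ⟩
  · intro p hp
    simp only [Finset.mem_product, Fintype.mem_piFinset] at hp
    simp only [Fintype.mem_piFinset]
    intro k
    refine Fin.cases ?_ ?_ k
    · simpa using hp.1
    · intro k'; simpa using hp.2 k'
  · intro a _; exact Fin.cons_self_tail a
  · intro p _; simp
  · intro a _; rw [Fin.cons_self_tail]

lemma msz_row {F : Type*} [Field F] {m : ℕ} (S : Finset F) (P : MvPolynomial (Fin (m+1)) F)
    (hP : P ≠ 0) (a' : Fin m → F) :
    ∑ b ∈ S, mszV (mszS' (Fin.cons b a') P)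
      ≤ (S.card : ℕ∞) * mszV (mszS' a'
          ((MvPolynomial.finSuccEquiv F m P).coeff (MvPolynomial.finSuccEquiv F m P).natDegree))
        + ((MvPolynomial.finSuccEquiv F m P).natDegree : ℕ∞) := by
  classical
  set p := MvPolynomial.finSuccEquiv F m P with hp_def
  have hp : p ≠ 0 := fun h => hP (by
    have := congrArg (MvPolynomial.finSuccEquiv F m).symm (hp_def.symm.trans h)
    simpa using this)
  set t := p.natDegree with ht_def
  have hPt : p.coeff t ≠ 0 := by
    rw [ht_def, ← Polynomial.leadingCoeff]
    exact Polynomial.leadingCoeff_ne_zero.mpr hp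
  have hW : mszS' a' (p.coeff t) ≠ 0 := mszS_ne_zero a' hPt
  obtain ⟨iF, hiF, hwiF⟩ := exists_mszV hW
  set q : Polynomial F := Polynomial.map (MvPolynomial.eval a')
    (MvPolynomial.finSuccEquiv F m (mszD' (Finsupp.cons 0 iF) P)) with hq_def
  have hqc : ∀ n, q.coeff n = MvPolynomial.eval a' (mszD' iF (p.coeff n)) := fun n => by
    rw [hq_def, Polynomial.coeff_map, mszD_finSuccEquiv, hp_def]
  have hqt : q.coeff t ≠ 0 := by rw [hqc, eval_mszD]; exact hiF
  have hq0 : q ≠ 0 := fun h => hqt (by simp [h])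
  have hqd : q.natDegree ≤ t := Polynomial.natDegree_le_iff_coeff_eq_zero.2 (fun N hN => by
    rw [hqc, Polynomial.coeff_eq_zero_of_natDegree_lt hN, mszD_zero, map_zero])
  have hb : ∀ b : F, mszV (mszS' (Fin.cons b a') P)
      ≤ (mszW iF : ℕ∞) + ((Polynomial.taylor b q).natTrailingDegree : ℕ∞) := by
    intro b
    have h1 := mszV_le_add_mszD (Finsupp.cons 0 iF) (mszS' (Fin.cons b a') P)
    rw [mszW_cons, zero_add] at h1
    refine h1.trans (add_le_add_right ?_ _)
    rw [mszD_mszS]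
    have h3 : Polynomial.taylor b q ≠ 0 := fun h0 =>
      hq0 (Polynomial.taylor_injective b (by rw [h0, map_zero]))
    have h4 : (Polynomial.taylor b q).coeff (Polynomial.taylor b q).natTrailingDegree ≠ 0 :=
      Polynomial.coeff_natTrailingDegree_ne_zero.2 h3
    set n := (Polynomial.taylor b q).natTrailingDegree with hn
    have heq : Polynomial.taylor b q = Polynomial.map (MvPolynomial.eval (0 : Fin m → F))
        (MvPolynomial.finSuccEquiv F m (mszS' (Fin.cons b a') (mszD' (Finsupp.cons 0 iF) P))) := by
      rw [hq_def]; exact taylor_comm b a' _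
    rw [heq, coeff_map_eval0] at h4
    refine (mszV_le h4).trans ?_
    rw [mszW_cons, mszW_zero, add_zero]
  calc ∑ b ∈ S, mszV (mszS' (Fin.cons b a') P)
      ≤ ∑ b ∈ S, ((mszW iF : ℕ∞) + ((Polynomial.taylor b q).natTrailingDegree : ℕ∞)) :=
        Finset.sum_le_sum (fun b _ => hb b)
    _ = S.card • (mszW iF : ℕ∞) + ∑ b ∈ S, ((Polynomial.taylor b q).natTrailingDegree : ℕ∞) := by
        rw [Finset.sum_add_distrib, Finset.sum_const]
    _ ≤ (S.card : ℕ∞) * mszV (mszS' a' (p.coeff t)) + (t : ℕ∞) := by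
        gcongr
        · rw [nsmul_eq_mul, hwiF]
        · rw [← Nat.cast_sum, Nat.cast_le]
          calc ∑ b ∈ S, (Polynomial.taylor b q).natTrailingDegree
              ≤ ∑ b ∈ S, q.rootMultiplicity b :=
                Finset.sum_le_sum (fun b _ => ntd_taylor_le_rootMultiplicity b hq0)
            _ ≤ q.natDegree := sum_rootMultiplicity_le S q
            _ ≤ t := hqd

lemma msz_key {F : Type*} [Field F] :
    ∀ (m : ℕ) (S : Finset F) (d : ℕ) (P : MvPolynomial (Fin m) F), P ≠ 0 → P.totalDegree ≤ d →
    ∑ a ∈ Fintype.piFinset (fun _ : Fin m => S), mszV (mszS' a P)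
      ≤ (d : ℕ∞) * (S.card : ℕ∞) ^ (m - 1) := by
  intro m
  induction m with
  | zero =>
    intro S d P hP _
    have h0 : ∀ a ∈ Fintype.piFinset (fun _ : Fin 0 => S), mszV (mszS' a P) ≤ 0 := fun a _ => by
      refine (mszV_le_totalDegree (mszS_ne_zero a hP)).trans ?_
      rw [msz_td_fin0]
      exact le_refl _
    calc ∑ a ∈ Fintype.piFinset (fun _ : Fin 0 => S), mszV (mszS' a P)
        ≤ ∑ _a ∈ Fintype.piFinset (fun _ : Fin 0 => S), (0 : ℕ∞) := Finset.sum_le_sum h0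
      _ = 0 := by simp
      _ ≤ _ := zero_le
  | succ m ih =>
    intro S d P hP hdeg
    set p := MvPolynomial.finSuccEquiv F m P with hp_def
    set t := p.natDegree with ht_def
    have hp : p ≠ 0 := fun h => hP (by
      have := congrArg (MvPolynomial.finSuccEquiv F m).symm (hp_def.symm.trans h)
      simpa using this)
    have hPt : p.coeff t ≠ 0 := by
      rw [ht_def, ← Polynomial.leadingCoeff]
      exact Polynomial.leadingCoeff_ne_zero.mpr hp
    have htd : (p.coeff t).totalDegree + t ≤ d :=
      le_trans (MvPolynomial.totalDegree_coeff_finSuccEquiv_add_le P t hPt) hdeg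
    have ht : t ≤ d := le_trans (Nat.le_add_left t _) htd
    have hPtd : (p.coeff t).totalDegree ≤ d - t := by omega
    rw [sum_piFinset_succ, Finset.sum_comm]
    calc ∑ a' ∈ Fintype.piFinset (fun _ : Fin m => S), ∑ b ∈ S, mszV (mszS' (Fin.cons b a') P)
        ≤ ∑ a' ∈ Fintype.piFinset (fun _ : Fin m => S),
            ((S.card : ℕ∞) * mszV (mszS' a' (p.coeff t)) + (t : ℕ∞)) :=
          Finset.sum_le_sum (fun a' _ => msz_row S P hP a')
      _ = (S.card : ℕ∞) *
            (∑ a' ∈ Fintype.piFinset (fun _ : Fin m => S), mszV (mszS' a' (p.coeff t)))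
            + (Fintype.piFinset (fun _ : Fin m => S)).card • (t : ℕ∞) := by
          rw [Finset.sum_add_distrib, Finset.sum_const, Finset.mul_sum]
      _ ≤ (d : ℕ∞) * (S.card : ℕ∞) ^ (m + 1 - 1) := by
          have hcard : (Fintype.piFinset (fun _ : Fin m => S)).card = S.card ^ m := by
            rw [Fintype.card_piFinset]
            simp
          cases m with
          | zero =>
            have hone : ∀ a' ∈ Fintype.piFinset (fun _ : Fin 0 => S),
                mszV (mszS' a' (p.coeff t)) ≤ 0 := fun a' _ => by
              refine (mszV_le_totalDegree (mszS_ne_zero a' hPt)).trans ?_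
              rw [msz_td_fin0]
              exact le_refl _
            have hsum : ∑ a' ∈ Fintype.piFinset (fun _ : Fin 0 => S),
                mszV (mszS' a' (p.coeff t)) = 0 := le_antisymm
              (le_trans (Finset.sum_le_sum hone) (by simp)) zero_le
            rw [hsum, mul_zero, zero_add, hcard]
            simp only [pow_zero, Nat.add_sub_cancel, one_smul, mul_one]
            exact_mod_cast ht
          | succ k =>
            have hih := ih S (d - t) (p.coeff t) hPt hPtd
            rw [hcard]
            calc (S.card : ℕ∞) * (∑ a' ∈ Fintype.piFinset (fun _ : Fin (k+1) => S),
                  mszV (mszS' a' (p.coeff t))) + (S.card ^ (k+1)) • (t : ℕ∞)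
                ≤ (S.card : ℕ∞) * (((d - t : ℕ) : ℕ∞) * (S.card : ℕ∞) ^ (k + 1 - 1))
                    + (S.card ^ (k+1)) • (t : ℕ∞) := by gcongr
              _ = (((d - t : ℕ) : ℕ∞) + (t : ℕ∞)) * (S.card : ℕ∞) ^ (k + 1) := by
                  rw [nsmul_eq_mul]
                  push_cast
                  ring
              _ = (d : ℕ∞) * (S.card : ℕ∞) ^ (k + 1 + 1 - 1) := by
                  rw [← Nat.cast_add, Nat.sub_add_cancel ht]
                  norm_num

end MSZfield

/-- **Multiplicity Schwartz–Zippel (sum form).**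
If `P` is a nonzero polynomial of total degree at most `d` in `m` variables over a field `F`,
and `S ⊆ F` is finite, then `∑_{a ∈ S^m} mult(P, a) ≤ d ⬝ |S|^(m-1)`. -/
theorem mult_schwartz_zippel_sum {F : Type*} [Field F] {m : ℕ} (S : Finset F) (d : ℕ)
    (P : MvPolynomial (Fin m) F) (hP : P ≠ 0) (hdeg : P.totalDegree ≤ d) :
    ∑ a ∈ Fintype.piFinset (fun _ : Fin m => S), mvMult P a
      ≤ (d : ℕ∞) * (S.card : ℕ∞) ^ (m - 1) := by
  rw [Finset.sum_congr rfl (fun a _ => mvMult_eq P a)]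
  exact msz_key m S d P hP hdeg
end

section
/- Let F be a field, let S ⊆ F be a finite set, let c be a positive integer, and let P ∈ F[X_1,...,X_m] be a nonzero polynomial of total degree at most d. Let z ∈ F^m and let y_1,...,y_m ∈ F^m be linearly independent over F. Then the number of tuples α = (α_1,...,α_m) ∈ S^m such that P vanishes with multiplicity at least c at the point z + α_1·y_1 + ... + α_m·y_m satisfies c·#{α ∈ S^m : mult(P, z + Σ_j α_j y_j) ≥ c} ≤ d·|S|^{m-1}. -/
open MvPolynomial

namespace MSZ

variable {F : Type*} [Field F] {m : ℕ}

/-- total degree of a monomial exponent vector -/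
def mdeg {m : ℕ} (s : Fin m →₀ ℕ) : ℕ := ∑ k, s k

lemma mdeg_add (s t : Fin m →₀ ℕ) : mdeg (s + t) = mdeg s + mdeg t := by
  simp [mdeg, Finset.sum_add_distrib]

lemma mdeg_eq_sum (s : Fin m →₀ ℕ) : mdeg s = s.sum fun _ e => e := by
  rw [Finsupp.sum_fintype] <;> simp [mdeg]

lemma mdeg_cons (j : ℕ) (s : Fin m →₀ ℕ) : mdeg (Finsupp.cons j s) = j + mdeg s := by
  simp [mdeg, Fin.sum_univ_succ, Finsupp.cons_zero, Finsupp.cons_succ]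

/-- shift of variables by `a` -/
noncomputable def mshift (a : Fin m → F) : MvPolynomial (Fin m) F →ₐ[F] MvPolynomial (Fin m) F :=
  MvPolynomial.bind₁ fun k => X k + C (a k)

lemma mshift_mshift (a b : Fin m → F) (P : MvPolynomial (Fin m) F) :
    mshift b (mshift a P) = mshift (a + b) P := by
  show (bind₁ _) ((bind₁ _) P) = _
  rw [bind₁_bind₁]
  unfold mshift
  have h : (fun i => (bind₁ fun k => X k + C (b k)) ((X i : MvPolynomial (Fin m) F) + C (a i)))
      = fun k => (X k : MvPolynomial (Fin m) F) + C ((a + b) k) := by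
    funext k
    simp only [map_add, bind₁_X_right, bind₁_C_right, Pi.add_apply, C_add]
    ring
  rw [h]

lemma mshift_zero (P : MvPolynomial (Fin m) F) : mshift (0 : Fin m → F) P = P := by
  show (bind₁ _) P = P
  simp [bind₁_X_left]

lemma mshift_ne_zero {P : MvPolynomial (Fin m) F} (hP : P ≠ 0) (a : Fin m → F) :
    mshift a P ≠ 0 := by
  intro h
  apply hP
  have := congrArg (mshift (-a)) h
  rwa [mshift_mshift, add_neg_cancel, mshift_zero, map_zero] at this

lemma eval_mvHasseDeriv (b : Fin m → F) (i : Fin m → ℕ) (P : MvPolynomial (Fin m) F) :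
    eval b (mvHasseDeriv i P) = coeff (Finsupp.equivFunOnFinite.symm i) (mshift b P) := by
  unfold mvHasseDeriv
  rw [← coeff_map, eval₂_comp_left (MvPolynomial.map (eval b))]
  have h1 : (MvPolynomial.map (eval b)).comp ((C : MvPolynomial (Fin m) F →+* _).comp C) =
      (C : F →+* MvPolynomial (Fin m) F) := by
    ext x
    simp
  have h2 : (MvPolynomial.map (eval b)) ∘ (fun k => (C (X k) : MvPolynomial (Fin m) (MvPolynomial (Fin m) F)) + X k)
      = fun k => X k + C (b k) := by
    funext k
    simp [add_comm]
  rw [h1, h2]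
  congr 1



lemma prod_X_pow_univ {R : Type*} [CommSemiring R] (g : Fin m →₀ ℕ) :
    (∏ k, (X k : MvPolynomial (Fin m) R) ^ g k) = monomial g 1 := by
  rw [← MvPolynomial.prod_X_pow_eq_monomial]
  exact (Finset.prod_subset (Finset.subset_univ _) (by
    intro x _ hx
    simp [Finsupp.notMem_support_iff.mp hx])).symm

lemma symm_coe_apply (i : Fin m → ℕ) (k : Fin m) :
    (Finsupp.equivFunOnFinite.symm i) k = i k := rfl


lemma mvHasseDeriv_monomial (i : Fin m → ℕ) (u : Fin m →₀ ℕ) (c : F) :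
    mvHasseDeriv i (monomial u c) =
      (∏ k, (u k).choose (i k)) • monomial (u - Finsupp.equivFunOnFinite.symm i) c := by
  classical
  unfold mvHasseDeriv
  rw [eval₂_monomial]
  rw [Finsupp.prod_fintype _ _ (fun k => pow_zero _)]
  have hfac : ∀ k : Fin m, ((C (X k) : MvPolynomial (Fin m) (MvPolynomial (Fin m) F)) + X k) ^ u k
      = ∑ j ∈ Finset.range (u k + 1),
          X k ^ j * C ((X k : MvPolynomial (Fin m) F) ^ (u k - j))
            * ((u k).choose j : MvPolynomial (Fin m) (MvPolynomial (Fin m) F)) := by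
    intro k
    rw [add_comm, add_pow]
    refine Finset.sum_congr rfl fun j hj => ?_
    rw [map_pow]
  simp only [hfac]
  rw [Finset.prod_univ_sum]
  rw [Finset.mul_sum, coeff_sum]
  have hterm : ∀ x : Fin m → ℕ,
      coeff (Finsupp.equivFunOnFinite.symm i)
        ((C.comp C) c * ∏ k, X k ^ x k * C ((X k : MvPolynomial (Fin m) F) ^ (u k - x k))
            * ((u k).choose (x k) : MvPolynomial (Fin m) (MvPolynomial (Fin m) F)))
      = (if Finsupp.equivFunOnFinite.symm x = Finsupp.equivFunOnFinite.symm i then (1:F) else 0)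
          • ((∏ k, (u k).choose (x k)) •
              monomial (u - Finsupp.equivFunOnFinite.symm x) c) := by
    intro x
    rw [Finset.prod_mul_distrib, Finset.prod_mul_distrib]
    have e1 : (∏ k, (X k : MvPolynomial (Fin m) (MvPolynomial (Fin m) F)) ^ x k)
        = monomial (Finsupp.equivFunOnFinite.symm x) 1 := by
      rw [← prod_X_pow_univ (Finsupp.equivFunOnFinite.symm x)]
      rfl
    have e2 : (∏ k, (C ((X k : MvPolynomial (Fin m) F) ^ (u k - x k)) : MvPolynomial (Fin m) (MvPolynomial (Fin m) F)))
        = C (monomial (u - Finsupp.equivFunOnFinite.symm x) (1:F)) := by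
      rw [← map_prod]
      congr 1
      rw [← prod_X_pow_univ (u - Finsupp.equivFunOnFinite.symm x)]
      refine Finset.prod_congr rfl fun k _ => ?_
      rw [Finsupp.tsub_apply]
      rfl
    have e3 : (∏ k, ((u k).choose (x k) : MvPolynomial (Fin m) (MvPolynomial (Fin m) F)))
        = C ((∏ k, (u k).choose (x k) : ℕ) : MvPolynomial (Fin m) F) := by
      push_cast
      rw [map_prod]
      refine Finset.prod_congr rfl fun k _ => ?_
      push_cast
      rfl
    rw [e1, e2, e3]
    show coeff _ (C (C c) * (monomial _ 1 * C _ * C _)) = _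
    rw [show (C (C c) * (monomial (Finsupp.equivFunOnFinite.symm x) (1:MvPolynomial (Fin m) F)
          * C (monomial (u - Finsupp.equivFunOnFinite.symm x) (1:F))
          * C ((∏ k, (u k).choose (x k) : ℕ) : MvPolynomial (Fin m) F)))
        = C ((C c) * (monomial (u - Finsupp.equivFunOnFinite.symm x) (1:F))
            * ((∏ k, (u k).choose (x k) : ℕ) : MvPolynomial (Fin m) F))
          * monomial (Finsupp.equivFunOnFinite.symm x) (1:MvPolynomial (Fin m) F) by
      rw [map_mul, map_mul]; ring]
    rw [coeff_C_mul, coeff_monomial]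
    by_cases h : Finsupp.equivFunOnFinite.symm x = Finsupp.equivFunOnFinite.symm i
    · rw [if_pos h, if_pos h, one_smul, mul_one]
      rw [C_mul_monomial]
      simp [mul_one, nsmul_eq_mul, mul_comm]
    · rw [if_neg h, if_neg h, mul_zero, zero_smul]
  simp only [hterm]
  by_cases hi : ∀ k, i k < u k + 1
  · rw [Finset.sum_eq_single_of_mem i
      (Fintype.mem_piFinset.mpr fun k => Finset.mem_range.mpr (hi k))]
    · rw [if_pos rfl, one_smul]
    · intro x _ hx
      rw [if_neg (fun h => hx (Finsupp.equivFunOnFinite.symm.injective h)), zero_smul]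
  · push_neg at hi
    obtain ⟨k, hk⟩ := hi
    rw [Finset.sum_eq_zero, Finset.prod_eq_zero (Finset.mem_univ k)
      (Nat.choose_eq_zero_of_lt (by omega)), zero_smul]
    intro x hx
    rw [if_neg, zero_smul]
    intro h
    have hxi : x = i := Finsupp.equivFunOnFinite.symm.injective h
    subst hxi
    exact absurd (Finset.mem_range.mp (Fintype.mem_piFinset.mp hx k)) (by omega)


lemma coeff_mvHasseDeriv (i : Fin m → ℕ) (P : MvPolynomial (Fin m) F) (σ : Fin m →₀ ℕ) :
    coeff σ (mvHasseDeriv i P)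
      = (∏ k, (σ k + i k).choose (i k)) * coeff (σ + Finsupp.equivFunOnFinite.symm i) P := by
  classical
  induction P using MvPolynomial.induction_on' with
  | add p q hp hq =>
    have h : mvHasseDeriv i (p + q) = mvHasseDeriv i p + mvHasseDeriv i q := by
      unfold mvHasseDeriv; rw [eval₂_add, coeff_add]
    rw [h, coeff_add, hp, hq, coeff_add, mul_add]
  | monomial u c =>
    rw [mvHasseDeriv_monomial, coeff_smul, coeff_monomial, coeff_monomial]
    by_cases h : u = σ + Finsupp.equivFunOnFinite.symm i
    · subst h
      have hsub : σ + Finsupp.equivFunOnFinite.symm i - Finsupp.equivFunOnFinite.symm i = σ := by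
        ext k; simp [Finsupp.tsub_apply, Finsupp.add_apply]
      have hpr : (∏ k, ((σ + Finsupp.equivFunOnFinite.symm i) k).choose (i k))
          = ∏ k, (σ k + i k).choose (i k) :=
        Finset.prod_congr rfl fun k _ => by rw [Finsupp.add_apply, symm_coe_apply]
      rw [if_pos hsub, if_pos rfl, hpr, nsmul_eq_mul]
    · rw [if_neg h]
      by_cases h2 : u - Finsupp.equivFunOnFinite.symm i = σ
      · rw [if_pos h2]
        have hex : ∃ k, u k < i k := by
          by_contra hc
          push_neg at hc
          apply h
          ext k
          simp only [Finsupp.add_apply, ← h2, Finsupp.tsub_apply, symm_coe_apply]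
          have := hc k
          omega
        obtain ⟨k, hk⟩ := hex
        rw [Finset.prod_eq_zero (Finset.mem_univ k) (Nat.choose_eq_zero_of_lt hk), zero_smul,
          mul_zero]
      · rw [if_neg h2, smul_zero, mul_zero]


noncomputable def psi : MvPolynomial (Fin m) F →+* MvPolynomial (Fin m) (MvPolynomial (Fin m) F) :=
  eval₂Hom (MvPolynomial.C.comp MvPolynomial.C) (fun k => C (X k) + X k)

lemma mvHasseDeriv_eq_coeff_psi (i : Fin m → ℕ) (P : MvPolynomial (Fin m) F) :
    mvHasseDeriv i P = coeff (Finsupp.equivFunOnFinite.symm i) (psi P) := rfl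

lemma mshift_X (a : Fin m → F) (k : Fin m) : mshift a (X k) = X k + C (a k) :=
  bind₁_X_right _ k

lemma mshift_C (a : Fin m → F) (r : F) : mshift a (C r) = C r :=
  bind₁_C_right _ r

lemma mshift_mvHasseDeriv (a : Fin m → F) (i : Fin m → ℕ) (P : MvPolynomial (Fin m) F) :
    mshift a (mvHasseDeriv i P) = mvHasseDeriv i (mshift a P) := by
  rw [mvHasseDeriv_eq_coeff_psi, mvHasseDeriv_eq_coeff_psi]
  have key : (MvPolynomial.map (mshift a).toRingHom).comp psi
       = psi.comp (mshift a).toRingHom := by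
    apply MvPolynomial.ringHom_ext
    · intro r
      simp only [RingHom.comp_apply, psi, coe_eval₂Hom, eval₂_C, RingHom.coe_comp,
        Function.comp_apply, AlgHom.toRingHom_eq_coe, RingHom.coe_coe, map_C, mshift_C,
        AlgHom.coe_toRingHom]
    · intro k
      simp only [RingHom.comp_apply, psi, coe_eval₂Hom, eval₂_X, AlgHom.toRingHom_eq_coe,
        RingHom.coe_coe, AlgHom.coe_toRingHom, map_add, map_C, map_X, mshift_X, eval₂_add,
        eval₂_C, RingHom.coe_comp, Function.comp_apply]
      ring
  have h2 := RingHom.congr_fun key P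
  simp only [RingHom.comp_apply, RingHom.coe_comp, Function.comp_apply,
    AlgHom.toRingHom_eq_coe, RingHom.coe_coe] at h2
  calc (mshift a) (coeff (Finsupp.equivFunOnFinite.symm i) (psi P))
      = coeff (Finsupp.equivFunOnFinite.symm i)
          (MvPolynomial.map (mshift a).toRingHom (psi P)) := by rw [coeff_map]; rfl
    _ = coeff (Finsupp.equivFunOnFinite.symm i) (psi ((mshift a) P)) := by
        rw [show MvPolynomial.map (mshift a).toRingHom (psi P) = psi ((mshift a) P) from h2]

lemma totalDegree_bind₁_le (f : Fin m → MvPolynomial (Fin m) F)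
    (hf : ∀ k, (f k).totalDegree ≤ 1) (P : MvPolynomial (Fin m) F) :
    ((bind₁ f) P).totalDegree ≤ P.totalDegree := by
  conv_lhs => rw [P.as_sum]
  rw [map_sum]
  refine (totalDegree_finset_sum _ _).trans (Finset.sup_le fun u hu => ?_)
  rw [bind₁_monomial]
  calc (C (coeff u P) * ∏ i ∈ u.support, f i ^ u i).totalDegree
      ≤ (C (coeff u P)).totalDegree + (∏ i ∈ u.support, f i ^ u i).totalDegree :=
        totalDegree_mul _ _
    _ ≤ 0 + ∑ i ∈ u.support, (f i ^ u i).totalDegree :=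
        add_le_add (le_of_eq (totalDegree_C _)) (totalDegree_finset_prod _ _)
    _ ≤ ∑ i ∈ u.support, u i * 1 := by
        rw [zero_add]
        exact Finset.sum_le_sum fun i _ =>
          (totalDegree_pow _ _).trans (Nat.mul_le_mul_left _ (hf i))
    _ = u.sum fun _ e => e := by simp [Finsupp.sum]
    _ ≤ P.totalDegree := le_totalDegree hu

lemma totalDegree_mshift_le (a : Fin m → F) (P : MvPolynomial (Fin m) F) :
    (mshift a P).totalDegree ≤ P.totalDegree := by
  refine totalDegree_bind₁_le _ (fun k => ?_) P
  refine (totalDegree_add _ _).trans ?_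
  simp [totalDegree_X, totalDegree_C]

/-- the multiplicity of `P` at `a`, as a natural number -/
noncomputable def mu (P : MvPolynomial (Fin m) F) (a : Fin m → F) : ℕ :=
  sInf (mdeg '' ((mshift a P).support : Set (Fin m →₀ ℕ)))

lemma mu_le {P : MvPolynomial (Fin m) F} {a : Fin m → F} {s : Fin m →₀ ℕ}
    (hs : s ∈ (mshift a P).support) : mu P a ≤ mdeg s :=
  Nat.sInf_le ⟨s, hs, rfl⟩

lemma exists_mu {P : MvPolynomial (Fin m) F} (hP : P ≠ 0) (a : Fin m → F) :
    ∃ s ∈ (mshift a P).support, mdeg s = mu P a := by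
  have hne : ((mshift a P).support : Set (Fin m →₀ ℕ)).Nonempty := by
    rw [Finset.coe_nonempty, Finset.nonempty_iff_ne_empty, Ne, support_eq_empty]
    exact mshift_ne_zero hP a
  have := Nat.sInf_mem (hne.image mdeg)
  obtain ⟨s, hs, h⟩ := this
  exact ⟨s, hs, h⟩

lemma le_mu {P : MvPolynomial (Fin m) F} (hP : P ≠ 0) {a : Fin m → F} {c : ℕ}
    (h : ∀ s ∈ (mshift a P).support, c ≤ mdeg s) : c ≤ mu P a := by
  obtain ⟨s, hs, hms⟩ := exists_mu hP a
  exact hms ▸ h s hs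

lemma mu_le_totalDegree {P : MvPolynomial (Fin m) F} (hP : P ≠ 0) (a : Fin m → F) :
    mu P a ≤ P.totalDegree := by
  obtain ⟨s, hs, hms⟩ := exists_mu hP a
  rw [← hms]
  calc mdeg s = s.sum fun _ e => e := mdeg_eq_sum s
    _ ≤ (mshift a P).totalDegree := le_totalDegree hs
    _ ≤ P.totalDegree := totalDegree_mshift_le a P

lemma le_mvMult_imp {c : ℕ} {P : MvPolynomial (Fin m) F} {a : Fin m → F}
    (h : (c : ℕ∞) ≤ mvMult P a) :
    ∀ s ∈ (mshift a P).support, c ≤ mdeg s := by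
  intro s hs
  by_contra hlt
  push_neg at hlt
  have h1 : ((mdeg s : ℕ) : ℕ∞) < mvMult P a :=
    lt_of_lt_of_le (by exact_mod_cast hlt) h
  rw [mvMult, lt_sSup_iff] at h1
  obtain ⟨M, hM, hlt2⟩ := h1
  have h0 : eval a (mvHasseDeriv (⇑s) P) = 0 := hM ⇑s (by exact_mod_cast hlt2)
  rw [eval_mvHasseDeriv, Finsupp.equivFunOnFinite_symm_coe] at h0
  rw [mem_support_iff] at hs
  exact hs h0

lemma symm_cons (j : ℕ) (i : Fin m → ℕ) :
    Finsupp.equivFunOnFinite.symm (Fin.cons j i : Fin (m+1) → ℕ)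
      = Finsupp.cons j (Finsupp.equivFunOnFinite.symm i) := by
  ext k
  refine Fin.cases ?_ (fun k => ?_) k
  · rw [symm_coe_apply, Fin.cons_zero, Finsupp.cons_zero]
  · rw [symm_coe_apply, Fin.cons_succ, Finsupp.cons_succ, symm_coe_apply]

lemma cons_add_cons (t j : ℕ) (σ τ : Fin m →₀ ℕ) :
    Finsupp.cons t σ + Finsupp.cons j τ = Finsupp.cons (t + j) (σ + τ) := by
  ext k
  refine Fin.cases ?_ (fun k => ?_) k
  · simp [Finsupp.cons_zero]
  · simp [Finsupp.cons_succ]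

lemma coeff_finSuccEquiv_hasse (P : MvPolynomial (Fin (m+1)) F) (i : Fin m → ℕ) (t : ℕ) :
    (finSuccEquiv F m (mvHasseDeriv (Fin.cons 0 i) P)).coeff t
      = mvHasseDeriv i ((finSuccEquiv F m P).coeff t) := by
  apply MvPolynomial.ext
  intro σ
  rw [finSuccEquiv_coeff_coeff, coeff_mvHasseDeriv, coeff_mvHasseDeriv,
    finSuccEquiv_coeff_coeff, symm_cons, cons_add_cons, add_zero]
  have hpr : (∏ k : Fin (m+1), ((Finsupp.cons t σ : Fin (m+1) →₀ ℕ) k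
        + (Fin.cons 0 i : Fin (m+1) → ℕ) k).choose ((Fin.cons 0 i : Fin (m+1) → ℕ) k))
      = ∏ k : Fin m, (σ k + i k).choose (i k) := by
    rw [Fin.prod_univ_succ]
    simp only [Finsupp.cons_zero, Finsupp.cons_succ, Fin.cons_zero, Fin.cons_succ,
      add_zero, Nat.choose_zero_right, one_mul]
  rw [hpr]

lemma degreeOf_zero_hasse_le (P : MvPolynomial (Fin (m+1)) F) (i : Fin m → ℕ) :
    degreeOf 0 (mvHasseDeriv (Fin.cons 0 i) P) ≤ degreeOf 0 P := by
  rw [degreeOf_eq_sup, degreeOf_eq_sup]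
  refine Finset.sup_le fun s hs => ?_
  rw [mem_support_iff, coeff_mvHasseDeriv] at hs
  have hmem : s + Finsupp.equivFunOnFinite.symm (Fin.cons 0 i : Fin (m+1) → ℕ) ∈ P.support := by
    rw [mem_support_iff]
    intro h
    exact hs (by rw [h, mul_zero])
  have h0 : s 0 = (s + Finsupp.equivFunOnFinite.symm (Fin.cons 0 i : Fin (m+1) → ℕ)) 0 := by
    rw [Finsupp.add_apply, symm_cons, Finsupp.cons_zero, add_zero]
  rw [h0]
  exact Finset.le_sup (f := fun u : Fin (m+1) →₀ ℕ => u 0) hmem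

lemma mdeg_symm_cons_zero (i : Fin m →₀ ℕ) :
    mdeg (Finsupp.equivFunOnFinite.symm (Fin.cons 0 ⇑i : Fin (m+1) → ℕ)) = mdeg i := by
  rw [symm_cons, mdeg_cons, Finsupp.equivFunOnFinite_symm_coe, zero_add]

lemma finSuccEquiv_C (x : F) : finSuccEquiv F m (C x) = Polynomial.C (C x) := by
  simp [finSuccEquiv_apply]

/-- divisibility from a lower bound on the trailing degree of the shift -/
lemma dvd_of_trail (p : MvPolynomial (Fin (m+1)) F) (b : F) (β : Fin m → F) (e : ℕ)
    (h : ∀ s ∈ (mshift (Fin.cons b β) p).support, e ≤ mdeg s) :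
    (Polynomial.X - Polynomial.C b) ^ e ∣ Polynomial.map (eval β) (finSuccEquiv F m p) := by
  classical
  set T := Polynomial.map (eval (0 : Fin m → F)) (finSuccEquiv F m (mshift (Fin.cons b β) p))
    with hT
  have step1 : Polynomial.X ^ e ∣ T := by
    rw [Polynomial.X_pow_dvd_iff]
    intro j hj
    rw [hT, Polynomial.coeff_map]
    have heval0 : ∀ q : MvPolynomial (Fin m) F, eval (0 : Fin m → F) q = coeff 0 q := by
      intro q
      rw [eval_zero]
      rfl
    rw [heval0, finSuccEquiv_coeff_coeff]
    by_contra hne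
    have hmem : (0 : Fin m →₀ ℕ).cons j ∈ (mshift (Fin.cons b β) p).support :=
      mem_support_iff.mpr hne
    have := h _ hmem
    rw [mdeg_cons] at this
    simp [mdeg] at this
    omega
  have step2 : T = (Polynomial.map (eval β) (finSuccEquiv F m p)).comp
      (Polynomial.X + Polynomial.C b) := by
    let φ : (Fin m → F) → (Polynomial (MvPolynomial (Fin m) F) →ₐ[F] Polynomial F) := fun g =>
      { Polynomial.mapRingHom (eval g) with
        commutes' := fun r => by
          change Polynomial.map (eval g) (Polynomial.C (C r)) = Polynomial.C r
          rw [Polynomial.map_C, eval_C] }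
    have hφ : ∀ (g : Fin m → F) q, φ g q = Polynomial.map (eval g) q := fun g q => rfl
    have hΦ : ((Polynomial.aeval (Polynomial.X + Polynomial.C b : Polynomial F)).comp
        ((φ β).comp (finSuccEquiv F m).toAlgHom))
      = (((φ (0 : Fin m → F)).comp
          (finSuccEquiv F m).toAlgHom).comp (mshift (Fin.cons b β))) := by
      apply MvPolynomial.algHom_ext
      intro k
      refine Fin.cases ?_ (fun k => ?_) k
      · simp only [AlgHom.coe_comp, Function.comp_apply, AlgEquiv.toAlgHom_eq_coe,
          AlgHom.coe_coe, AlgEquiv.coe_toAlgHom, mshift_X, finSuccEquiv_X_zero, hφ, map_add, Polynomial.map_X,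
          Polynomial.map_C, Fin.cons_zero, finSuccEquiv_C, eval_C, Polynomial.aeval_X,
          map_add]
        simp
      · simp only [AlgHom.coe_comp, Function.comp_apply, AlgEquiv.toAlgHom_eq_coe,
          AlgHom.coe_coe, AlgEquiv.coe_toAlgHom, mshift_X, finSuccEquiv_X_succ, hφ, map_add, Polynomial.map_X,
          Polynomial.map_C, Fin.cons_succ, finSuccEquiv_C, eval_C, eval_X,
          ← Polynomial.comp_eq_aeval, Polynomial.C_comp, eval_zero]
        simp
    have happ := congrArg (fun f => f p) (congrArg DFunLike.coe hΦ)
    simp only [AlgHom.coe_comp, Function.comp_apply, AlgEquiv.toAlgHom_eq_coe,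
      AlgHom.coe_coe, AlgEquiv.coe_toAlgHom, hφ] at happ
    rw [hT, ← happ, ← Polynomial.comp_eq_aeval]
  obtain ⟨U, hU⟩ := step1
  have := congrArg (fun q => q.comp (Polynomial.X - Polynomial.C b)) (hU.symm.trans step2)
  rw [Polynomial.mul_comp, Polynomial.pow_comp, Polynomial.X_comp, Polynomial.comp_assoc] at this
  have hXX : (Polynomial.X + Polynomial.C b).comp (Polynomial.X - Polynomial.C b)
      = (Polynomial.X : Polynomial F) := by
    simp [Polynomial.add_comp]
  rw [hXX, Polynomial.comp_X] at this
  exact ⟨U.comp (Polynomial.X - Polynomial.C b), this.symm⟩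

lemma sum_rootMult_le (R : Polynomial F) (hR : R ≠ 0) (S : Finset F) :
    ∑ b ∈ S, R.rootMultiplicity b ≤ R.natDegree := by
  classical
  have h1 : ∑ b ∈ S, R.rootMultiplicity b = ∑ b ∈ S, R.roots.count b :=
    Finset.sum_congr rfl fun b _ => (Polynomial.count_roots R).symm
  have h2 : ∑ b ∈ S, R.roots.count b = ∑ b ∈ S ∩ R.roots.toFinset, R.roots.count b := by
    refine (Finset.sum_subset Finset.inter_subset_left fun x hx hnx => ?_).symm
    rw [Multiset.count_eq_zero]
    intro hmem
    exact hnx (Finset.mem_inter.mpr ⟨hx, Multiset.mem_toFinset.mpr hmem⟩)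
  rw [h1, h2]
  calc ∑ b ∈ S ∩ R.roots.toFinset, R.roots.count b
      ≤ ∑ b ∈ R.roots.toFinset, R.roots.count b :=
        Finset.sum_le_sum_of_subset Finset.inter_subset_right
    _ = Multiset.card R.roots := Multiset.toFinset_sum_count_eq _
    _ ≤ R.natDegree := Polynomial.card_roots' R

lemma claim_step (S : Finset F) (P : MvPolynomial (Fin (m+1)) F) (hP : P ≠ 0) (β : Fin m → F) :
    ∑ b ∈ S, mu P (Fin.cons b β)
      ≤ S.card * mu ((finSuccEquiv F m P).coeff (finSuccEquiv F m P).natDegree) β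
        + (finSuccEquiv F m P).natDegree := by
  classical
  set Q := finSuccEquiv F m P with hQdef
  set t := Q.natDegree with htdef
  have hQ : Q ≠ 0 := by
    rw [hQdef, Ne, EmbeddingLike.map_eq_zero_iff]
    exact hP
  have hQt : Q.coeff t ≠ 0 := by
    rw [htdef]
    exact Polynomial.leadingCoeff_ne_zero.mpr hQ
  set μt := mu (Q.coeff t) β with hμtdef
  obtain ⟨s₀, hs₀, hmdeg₀⟩ := exists_mu hQt β
  set P' := mvHasseDeriv (Fin.cons 0 ⇑s₀) P with hP'def
  set R := Polynomial.map (eval β) (finSuccEquiv F m P') with hRdef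
  have hslice : (finSuccEquiv F m P').coeff t = mvHasseDeriv (⇑s₀) (Q.coeff t) :=
    coeff_finSuccEquiv_hasse P (⇑s₀) t
  have hRt : R.coeff t ≠ 0 := by
    rw [hRdef, Polynomial.coeff_map, hslice, eval_mvHasseDeriv,
      Finsupp.equivFunOnFinite_symm_coe]
    exact mem_support_iff.mp hs₀
  have hR : R ≠ 0 := fun h => hRt (by rw [h, Polynomial.coeff_zero])
  have ht0 : t = degreeOf 0 P := natDegree_finSuccEquiv P
  have hdegR : R.natDegree ≤ t := by
    refine le_trans Polynomial.natDegree_map_le ?_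
    rw [natDegree_finSuccEquiv, ht0]
    exact degreeOf_zero_hasse_le P ⇑s₀
  have hroot : ∀ b : F, mu P (Fin.cons b β) ≤ μt + R.rootMultiplicity b := by
    intro b
    have htrail : ∀ s ∈ (mshift (Fin.cons b β) P').support,
        mu P (Fin.cons b β) - μt ≤ mdeg s := by
      intro s hs
      rw [hP'def, mshift_mvHasseDeriv] at hs
      rw [mem_support_iff, coeff_mvHasseDeriv] at hs
      have hmem : s + Finsupp.equivFunOnFinite.symm (Fin.cons 0 ⇑s₀ : Fin (m+1) → ℕ)
          ∈ (mshift (Fin.cons b β) P).support :=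
        mem_support_iff.mpr fun h => hs (by rw [h, mul_zero])
      have h1 := mu_le hmem
      rw [mdeg_add, mdeg_symm_cons_zero, hmdeg₀] at h1
      omega
    have hdvd := dvd_of_trail P' b β _ htrail
    have h2 := (Polynomial.le_rootMultiplicity_iff hR).mpr hdvd
    omega
  calc ∑ b ∈ S, mu P (Fin.cons b β) ≤ ∑ b ∈ S, (μt + R.rootMultiplicity b) :=
        Finset.sum_le_sum fun b _ => hroot b
    _ = S.card * μt + ∑ b ∈ S, R.rootMultiplicity b := by
        rw [Finset.sum_add_distrib, Finset.sum_const, smul_eq_mul]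
    _ ≤ S.card * μt + t := by
        have := sum_rootMult_le R hR S
        omega

lemma sum_piFinset_succ {M : Type*} [AddCommMonoid M] (S : Finset F)
    (f : (Fin (m+1) → F) → M) :
    ∑ α ∈ Fintype.piFinset (fun _ : Fin (m+1) => S), f α
      = ∑ b ∈ S, ∑ β ∈ Fintype.piFinset (fun _ : Fin m => S), f (Fin.cons b β) := by
  rw [← Finset.sum_product']
  refine Finset.sum_nbij' (fun α => (α 0, fun k => α k.succ))
    (fun p => Fin.cons p.1 p.2) ?_ ?_ ?_ ?_ ?_
  · intro α hα
    rw [Fintype.mem_piFinset] at hα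
    exact Finset.mem_product.mpr ⟨hα 0, Fintype.mem_piFinset.mpr fun k => hα k.succ⟩
  · intro p hp
    obtain ⟨h1, h2⟩ := Finset.mem_product.mp hp
    refine Fintype.mem_piFinset.mpr fun k => ?_
    refine Fin.cases ?_ (fun k => ?_) k
    · simpa using h1
    · simpa using Fintype.mem_piFinset.mp h2 k
  · intro α _
    funext k
    refine Fin.cases ?_ (fun k => ?_) k <;> simp
  · intro p _
    simp
  · intro α _
    congr
    funext k
    refine Fin.cases ?_ (fun k => ?_) k <;> simp

lemma mu_fin_zero (Qc : MvPolynomial (Fin 0) F) (h : Qc ≠ 0) (β : Fin 0 → F) :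
    mu Qc β = 0 := by
  obtain ⟨s, _, hms⟩ := exists_mu h β
  rw [← hms]
  simp [mdeg]

theorem key_SZ : ∀ (m : ℕ) (P : MvPolynomial (Fin m) F), P ≠ 0 → ∀ S : Finset F,
    ∑ α ∈ Fintype.piFinset (fun _ : Fin m => S), mu P α
      ≤ P.totalDegree * S.card ^ (m - 1) := by
  intro m
  induction m with
  | zero =>
    intro P hP S
    refine (Finset.sum_le_card_nsmul _ _ P.totalDegree
      fun α _ => mu_le_totalDegree hP α).trans ?_
    have hcard : (Fintype.piFinset (fun _ : Fin 0 => S)).card = 1 := by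
      simp [Fintype.card_piFinset]
    rw [hcard]
    simp
  | succ m ih =>
    intro P hP S
    set Q := finSuccEquiv F m P with hQdef
    set t := Q.natDegree with htdef
    have hQ : Q ≠ 0 := by
      rw [hQdef, Ne, EmbeddingLike.map_eq_zero_iff]
      exact hP
    have hQt : Q.coeff t ≠ 0 := by
      rw [htdef]
      exact Polynomial.leadingCoeff_ne_zero.mpr hQ
    have hQt_deg : (Q.coeff t).totalDegree + t ≤ P.totalDegree :=
      totalDegree_coeff_finSuccEquiv_add_le P t hQt
    rw [sum_piFinset_succ S (fun α => mu P α), Finset.sum_comm]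
    have hcardpi : (Fintype.piFinset (fun _ : Fin m => S)).card = S.card ^ m := by
      simp [Fintype.card_piFinset]
    calc ∑ β ∈ Fintype.piFinset (fun _ : Fin m => S), ∑ b ∈ S, mu P (Fin.cons b β)
        ≤ ∑ β ∈ Fintype.piFinset (fun _ : Fin m => S), (S.card * mu (Q.coeff t) β + t) :=
          Finset.sum_le_sum fun β _ => claim_step S P hP β
      _ = S.card * (∑ β ∈ Fintype.piFinset (fun _ : Fin m => S), mu (Q.coeff t) β)
            + t * S.card ^ m := by
          rw [Finset.sum_add_distrib, Finset.sum_const, Finset.mul_sum, smul_eq_mul,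
            hcardpi, mul_comm t]
      _ ≤ P.totalDegree * S.card ^ ((m + 1) - 1) := ?_
    cases m with
    | zero =>
      have hzero : (∑ β ∈ Fintype.piFinset (fun _ : Fin 0 => S), mu (Q.coeff t) β) = 0 :=
        Finset.sum_eq_zero fun β _ => mu_fin_zero _ hQt β
      rw [hzero]
      simpa using (by omega : t ≤ P.totalDegree)
    | succ m' =>
      have hIH := ih (Q.coeff t) hQt S
      calc S.card * (∑ β ∈ Fintype.piFinset (fun _ : Fin (m'+1) => S), mu (Q.coeff t) β)
            + t * S.card ^ (m' + 1)
          ≤ S.card * ((Q.coeff t).totalDegree * S.card ^ ((m' + 1) - 1))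
              + t * S.card ^ (m' + 1) := by
            have := Nat.mul_le_mul_left S.card hIH
            omega
        _ = ((Q.coeff t).totalDegree + t) * S.card ^ (m' + 1) := by
            simp only [Nat.add_sub_cancel]
            ring
        _ ≤ P.totalDegree * S.card ^ ((m' + 1 + 1) - 1) :=
            Nat.mul_le_mul_right _ hQt_deg

lemma trail_mul {p q : MvPolynomial (Fin m) F} {a b : ℕ}
    (hp : ∀ s ∈ p.support, a ≤ mdeg s) (hq : ∀ s ∈ q.support, b ≤ mdeg s) :
    ∀ s ∈ (p * q).support, a + b ≤ mdeg s := by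
  classical
  intro s hs
  have hmem := MvPolynomial.support_mul p q hs
  rw [Finset.mem_add] at hmem
  obtain ⟨u, hu, v, hv, rfl⟩ := hmem
  rw [mdeg_add]
  exact add_le_add (hp u hu) (hq v hv)

lemma trail_pow {g : MvPolynomial (Fin m) F} (hg : ∀ s ∈ g.support, 1 ≤ mdeg s) (n : ℕ) :
    ∀ s ∈ (g ^ n).support, n ≤ mdeg s := by
  induction n with
  | zero => intro s _; exact Nat.zero_le _
  | succ n ihn =>
    rw [pow_succ]
    exact fun s hs => trail_mul ihn hg s hs

lemma trail_prod {g : Fin m → MvPolynomial (Fin m) F}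
    (hg : ∀ k, ∀ s ∈ (g k).support, 1 ≤ mdeg s) (u : Fin m →₀ ℕ) (A : Finset (Fin m)) :
    ∀ s ∈ (∏ k ∈ A, g k ^ u k).support, (∑ k ∈ A, u k) ≤ mdeg s := by
  classical
  induction A using Finset.induction with
  | empty => intro s hs; simp
  | @insert a A hnotmem ih =>
    rw [Finset.prod_insert hnotmem, Finset.sum_insert hnotmem]
    exact fun s hs => trail_mul (trail_pow (hg a) (u a)) ih s hs

lemma trail_bind₁ {g : Fin m → MvPolynomial (Fin m) F}
    (hg : ∀ k, ∀ s ∈ (g k).support, 1 ≤ mdeg s)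
    {R : MvPolynomial (Fin m) F} {c : ℕ} (hR : ∀ s ∈ R.support, c ≤ mdeg s) :
    ∀ s ∈ ((bind₁ g) R).support, c ≤ mdeg s := by
  classical
  intro s hs
  have hrepr : (bind₁ g) R = ∑ u ∈ R.support, (bind₁ g) (monomial u (coeff u R)) := by
    rw [← map_sum, ← R.as_sum]
  rw [hrepr] at hs
  obtain ⟨u, hu, hsu⟩ := Finset.mem_biUnion.mp (MvPolynomial.support_sum hs)
  rw [bind₁_monomial] at hsu
  have hC : ∀ s' ∈ (C (coeff u R) : MvPolynomial (Fin m) F).support, 0 ≤ mdeg s' :=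
    fun s' _ => Nat.zero_le _
  have h2 := trail_mul hC (trail_prod hg u u.support) s hsu
  have hc : c ≤ ∑ k ∈ u.support, u k := by
    have h3 := hR u hu
    have h4 : mdeg u = ∑ k ∈ u.support, u k := by
      rw [mdeg]
      exact (Finset.sum_subset (Finset.subset_univ _)
        (fun x _ hx => Finsupp.notMem_support_iff.mp hx)).symm
    omega
  omega

end MSZ

open MSZ

/-- **Multiplicity Schwartz–Zippel along an injective affine map.**
If `P` is a nonzero polynomial of total degree at most `d` in `m` variables over a field `F`,
`S ⊆ F` is finite, `c > 0`, `z ∈ F^m` and `y_1, …, y_m ∈ F^m` are linearly independent, then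
`c ⬝ #{α ∈ S^m : mult(P, z + ∑_j α_j y_j) ≥ c} ≤ d ⬝ |S|^(m-1)`. -/
theorem mult_schwartz_zippel_affine {F : Type*} [Field F] {m : ℕ} (S : Finset F) (d c : ℕ)
    (hc : 0 < c) (P : MvPolynomial (Fin m) F) (hP : P ≠ 0) (hdeg : P.totalDegree ≤ d)
    (z : Fin m → F) (y : Fin m → Fin m → F) (hy : LinearIndependent F y) :
    c * Nat.card {α : Fin m → F //
        (∀ k, α k ∈ S) ∧ (c : ℕ∞) ≤ mvMult P (z + ∑ j, α j • y j)}
      ≤ d * S.card ^ (m - 1) := by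
  classical
  set L : Fin m → MvPolynomial (Fin m) F := fun k => C (z k) + ∑ j, C (y j k) * X j with hL
  set QL := (bind₁ L) P with hQL
  have hyU : IsUnit (Matrix.of y) :=
    Matrix.linearIndependent_rows_iff_isUnit.mp hy
  have hinv : (Matrix.of y)⁻¹ * (Matrix.of y) = 1 :=
    Matrix.nonsing_inv_mul _ ((Matrix.isUnit_iff_isUnit_det _).mp hyU)
  set N := (Matrix.of y)⁻¹ with hN
  set L' : Fin m → MvPolynomial (Fin m) F :=
    fun j => ∑ l, C (N l j) * (X l - C (z l)) with hL'
  have hcomp : ∀ k, (bind₁ L') (L k) = X k := by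
    intro k
    rw [hL]
    simp only [map_add, map_sum, map_mul, bind₁_C_right, bind₁_X_right]
    have hswap : (∑ j, C (y j k) * L' j)
        = ∑ l, C ((N * Matrix.of y) l k) * (X l - C (z l)) := by
      rw [hL']
      simp only [Finset.mul_sum]
      rw [Finset.sum_comm]
      refine Finset.sum_congr rfl fun l _ => ?_
      rw [Matrix.mul_apply, map_sum, Finset.sum_mul]
      refine Finset.sum_congr rfl fun j _ => ?_
      rw [← mul_assoc, ← C_mul, mul_comm (y j k) (N l j)]
      rfl
    rw [hswap, hinv]
    have hsum : (∑ l, C ((1 : Matrix (Fin m) (Fin m) F) l k) * (X l - C (z l)))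
        = X k - C (z k) := by
      have : ∀ l, C ((1 : Matrix (Fin m) (Fin m) F) l k) * (X l - C (z l))
          = if l = k then X l - C (z l) else 0 := by
        intro l
        rw [Matrix.one_apply]
        by_cases h : l = k <;> simp [h]
      simp only [this]
      rw [Finset.sum_ite_eq' Finset.univ k (fun l => X l - C (z l))]
      simp
    rw [hsum]
    ring
  have hQLne : QL ≠ 0 := by
    intro h
    apply hP
    have h2 : (bind₁ L') QL = 0 := by rw [h, map_zero]
    rw [hQL, bind₁_bind₁, show (fun i => (bind₁ L') (L i)) = X from funext hcomp,
      bind₁_X_left] at h2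
    simpa using h2
  have hdegL : ∀ k, (L k).totalDegree ≤ 1 := by
    intro k
    rw [hL]
    refine (totalDegree_add _ _).trans (max_le (by rw [totalDegree_C]; omega) ?_)
    refine (totalDegree_finset_sum _ _).trans (Finset.sup_le fun j _ => ?_)
    refine (totalDegree_mul _ _).trans ?_
    rw [totalDegree_C, totalDegree_X]
  have hdegQL : QL.totalDegree ≤ P.totalDegree := totalDegree_bind₁_le L hdegL P
  have htransfer : ∀ α : Fin m → F,
      (c : ℕ∞) ≤ mvMult P (z + ∑ j, α j • y j) → c ≤ mu QL α := by
    intro α hα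
    set w : Fin m → F := z + ∑ j, α j • y j with hw
    have h1 := le_mvMult_imp hα
    set G : Fin m → MvPolynomial (Fin m) F := fun k => ∑ j, C (y j k) * X j with hG
    have hGtrail : ∀ k, ∀ s ∈ (G k).support, 1 ≤ mdeg s := by
      intro k s hs
      rw [hG] at hs
      obtain ⟨j, _, hj⟩ := Finset.mem_biUnion.mp (MvPolynomial.support_sum hs)
      have hmono : (C (y j k) * X j : MvPolynomial (Fin m) F)
          = monomial (Finsupp.single j 1) (y j k) := by
        rw [← MvPolynomial.C_mul_X_pow_eq_monomial, pow_one]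
      rw [hmono] at hj
      have hj2 := MvPolynomial.support_monomial_subset hj
      rw [Finset.mem_singleton] at hj2
      subst hj2
      simp [mdeg, Finsupp.single_apply]
    have hhom : (mshift α).comp (bind₁ L) = (bind₁ G).comp (mshift w) := by
      apply MvPolynomial.algHom_ext
      intro k
      simp only [AlgHom.coe_comp, Function.comp_apply, bind₁_X_right, mshift_X, map_add,
        mshift_C, map_sum, map_mul, bind₁_C_right, hG, hL]
      rw [hw]
      simp only [Pi.add_apply, Finset.sum_apply, Pi.smul_apply, smul_eq_mul, map_add, map_sum,
        ← C_mul, mul_add, Finset.sum_add_distrib]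
      simp only [mul_comm]
      ring
    have hiden : mshift α QL = (bind₁ G) (mshift w P) := by
      rw [hQL]
      exact AlgHom.congr_fun hhom P
    refine le_mu hQLne ?_
    rw [hiden]
    exact trail_bind₁ hGtrail h1
  set T := (Fintype.piFinset (fun _ : Fin m => S)).filter
      (fun α => (c : ℕ∞) ≤ mvMult P (z + ∑ j, α j • y j)) with hT
  have hpred : ∀ α : Fin m → F,
      ((∀ k, α k ∈ S) ∧ (c : ℕ∞) ≤ mvMult P (z + ∑ j, α j • y j)) ↔ α ∈ T := by
    intro α
    rw [hT, Finset.mem_filter, Fintype.mem_piFinset]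
  have hcardT : Nat.card {α : Fin m → F //
      (∀ k, α k ∈ S) ∧ (c : ℕ∞) ≤ mvMult P (z + ∑ j, α j • y j)} = T.card := by
    rw [Nat.card_congr (Equiv.subtypeEquivRight hpred), Nat.card_eq_finsetCard]
  rw [hcardT]
  calc c * T.card = ∑ _α ∈ T, c := by rw [Finset.sum_const, smul_eq_mul, mul_comm]
    _ ≤ ∑ α ∈ T, mu QL α :=
        Finset.sum_le_sum fun α hα => htransfer α (Finset.mem_filter.mp hα).2
    _ ≤ ∑ α ∈ Fintype.piFinset (fun _ : Fin m => S), mu QL α :=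
        Finset.sum_le_sum_of_subset (Finset.filter_subset _ _)
    _ ≤ QL.totalDegree * S.card ^ (m - 1) := key_SZ m QL hQLne S
    _ ≤ d * S.card ^ (m - 1) := Nat.mul_le_mul_right _ (le_trans hdegQL hdeg)
end

section
/- Let q be a prime power, let F_q be the finite field with q elements, and let s be a positive integer. Let P, Q ∈ F_q[X_1,...,X_m] be distinct polynomials of total degree at most d. Then the number of points a ∈ F_q^m at which P^{(i)}(a) = Q^{(i)}(a) for every vector i with wt(i) < s satisfies s·#{a ∈ F_q^m : P^{(<s)}(a) = Q^{(<s)}(a)} ≤ d·q^{m-1}. (Equivalently, the multiplicity code of order-s evaluations of degree-d polynomials in m variables over F_q has relative minimum distance at least 1 − d/(sq).) -/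
open MvPolynomial Finset

namespace MultCodeAux

variable {F : Type*} [Field F]

/-- weight of a monomial -/
def wtM {n : ℕ} (d : Fin n →₀ ℕ) : ℕ := d.sum fun _ e => e

lemma wtM_eq_sum {n : ℕ} (d : Fin n →₀ ℕ) : wtM d = ∑ k, d k := by
  rw [wtM, Finsupp.sum_fintype]
  intro i; rfl

lemma wtM_cons {n : ℕ} (u : ℕ) (d : Fin n →₀ ℕ) : wtM (d.cons u) = u + wtM d := by
  rw [wtM_eq_sum, wtM_eq_sum, Fin.sum_univ_succ]
  simp [Finsupp.cons_zero, Finsupp.cons_succ]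

/-- the translation ring hom `P(X) ↦ P(X + a)` -/
noncomputable def trP {n : ℕ} (a : Fin n → F) :
    MvPolynomial (Fin n) F →+* MvPolynomial (Fin n) F :=
  eval₂Hom C (fun k => C (a k) + X k)

@[simp] lemma trP_C {n : ℕ} (a : Fin n → F) (r : F) : trP a (C r) = C r := by
  simp [trP]

@[simp] lemma trP_X {n : ℕ} (a : Fin n → F) (k : Fin n) :
    trP a (X k) = C (a k) + X k := by
  simp [trP]

lemma trP_trP {n : ℕ} (a b : Fin n → F) (P : MvPolynomial (Fin n) F) :
    trP a (trP b P) = trP (a + b) P := by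
  have : (trP (F := F) a).comp (trP b) = trP (a + b) := by
    apply MvPolynomial.ringHom_ext
    · intro r; simp
    · intro k
      simp only [RingHom.coe_comp, Function.comp_apply, trP_X, map_add, trP_C, Pi.add_apply]
      ring
  exact RingHom.congr_fun this P

lemma trP_zero {n : ℕ} (P : MvPolynomial (Fin n) F) : trP 0 P = P := by
  have : trP (F := F) (0 : Fin n → F) = RingHom.id _ := by
    apply MvPolynomial.ringHom_ext
    · intro r; simp
    · intro k; simp
  rw [this]; rfl

lemma trP_ne_zero {n : ℕ} (a : Fin n → F) {P : MvPolynomial (Fin n) F} (hP : P ≠ 0) :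
    trP a P ≠ 0 := by
  intro h
  apply hP
  have := congrArg (trP (-a)) h
  rw [trP_trP, map_zero, neg_add_cancel, trP_zero] at this
  exact this

open scoped Classical in
/-- `min s (minimal weight of a monomial of P)`, with the convention that it is `s` for `P = 0`. -/
noncomputable def capMin {n : ℕ} (s : ℕ) (P : MvPolynomial (Fin n) F) : ℕ :=
  ((Finset.range s).filter fun w => ∀ d ∈ P.support, w < wtM d).card

lemma capMin_le_s {n : ℕ} (s : ℕ) (P : MvPolynomial (Fin n) F) : capMin s P ≤ s := by
  classical
  rw [capMin]; exact (Finset.card_le_card (Finset.filter_subset _ _)).trans_eq (Finset.card_range s)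

lemma capMin_le_of_mem {n : ℕ} {s : ℕ} {P : MvPolynomial (Fin n) F} {d : Fin n →₀ ℕ} {w : ℕ}
    (hd : d ∈ P.support) (hw : wtM d ≤ w) : capMin s P ≤ w := by
  classical
  have hsub : ((Finset.range s).filter fun w => ∀ d ∈ P.support, w < wtM d) ⊆
      Finset.range w := by
    intro x hx
    simp only [Finset.mem_filter, Finset.mem_range] at hx ⊢
    exact lt_of_lt_of_le (hx.2 d hd) hw
  simpa [capMin] using (Finset.card_le_card hsub).trans_eq (Finset.card_range w)

lemma exists_le_of_capMin_lt {n : ℕ} {s : ℕ} {P : MvPolynomial (Fin n) F}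
    (h : capMin s P < s) : ∃ d ∈ P.support, wtM d ≤ capMin s P := by
  classical
  by_contra hc
  push_neg at hc
  have hsub : Finset.range (capMin s P + 1) ⊆
      ((Finset.range s).filter fun w => ∀ d ∈ P.support, w < wtM d) := by
    intro x hx
    simp only [Finset.mem_range] at hx
    have hx' : x ≤ capMin s P := Nat.lt_succ_iff.mp hx
    refine Finset.mem_filter.mpr ⟨Finset.mem_range.mpr (lt_of_le_of_lt hx' h), ?_⟩
    intro d hd
    exact lt_of_le_of_lt hx' (hc d hd)
  have := Finset.card_le_card hsub
  simp only [Finset.card_range] at this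
  have : capMin s P + 1 ≤ capMin s P := by
    simpa [capMin] using this
  omega

lemma capMin_eq_of_forall {n : ℕ} {s : ℕ} {P : MvPolynomial (Fin n) F}
    (h : ∀ d ∈ P.support, s ≤ wtM d) : capMin s P = s := by
  classical
  have hmem : ∀ x ∈ Finset.range s, (∀ d ∈ P.support, x < wtM d) := by
    intro x hx d hd
    exact lt_of_lt_of_le (Finset.mem_range.mp hx) (h d hd)
  rw [capMin, Finset.filter_true_of_mem hmem, Finset.card_range]

end MultCodeAux
section Part2
open Polynomial
namespace MultCodeAux

variable {F : Type*} [Field F]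

/-- extract the `d0`-coefficient of each coefficient of a polynomial over `MvPolynomial`. -/
noncomputable def projC {n : ℕ} (d0 : Fin n →₀ ℕ)
    (q : Polynomial (MvPolynomial (Fin n) F)) : Polynomial F :=
  ⟨AddMonoidAlgebra.ofCoeff (q.toFinsupp.coeff.mapRange (MvPolynomial.coeff d0) (MvPolynomial.coeff_zero d0))⟩

@[simp] lemma projC_coeff {n : ℕ} (d0 : Fin n →₀ ℕ)
    (q : Polynomial (MvPolynomial (Fin n) F)) (k : ℕ) :
    (projC d0 q).coeff k = MvPolynomial.coeff d0 (q.coeff k) := by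
  rcases q with ⟨q⟩
  simp [projC, Polynomial.coeff]

lemma projC_natDegree_le {n : ℕ} (d0 : Fin n →₀ ℕ)
    (q : Polynomial (MvPolynomial (Fin n) F)) :
    (projC d0 q).natDegree ≤ q.natDegree := by
  apply Polynomial.natDegree_le_iff_coeff_eq_zero.mpr
  intro N hN
  rw [projC_coeff, Polynomial.coeff_eq_zero_of_natDegree_lt hN, MvPolynomial.coeff_zero]

lemma projC_hasseDeriv {n : ℕ} (d0 : Fin n →₀ ℕ) (u : ℕ)
    (q : Polynomial (MvPolynomial (Fin n) F)) :
    projC d0 (Polynomial.hasseDeriv u q) = Polynomial.hasseDeriv u (projC d0 q) := by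
  ext k
  rw [projC_coeff, Polynomial.hasseDeriv_coeff, Polynomial.hasseDeriv_coeff, projC_coeff,
    ← nsmul_eq_mul, ← nsmul_eq_mul, MvPolynomial.coeff_smul]

lemma projC_eval {n : ℕ} (d0 : Fin n →₀ ℕ) (b : F)
    (q : Polynomial (MvPolynomial (Fin n) F)) :
    MvPolynomial.coeff d0 (q.eval (MvPolynomial.C b)) = (projC d0 q).eval b := by
  have h1 : q.natDegree < q.natDegree + 1 := Nat.lt_succ_self _
  have h2 : (projC d0 q).natDegree < q.natDegree + 1 :=
    lt_of_le_of_lt (projC_natDegree_le d0 q) h1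
  rw [Polynomial.eval_eq_sum_range' h1, Polynomial.eval_eq_sum_range' h2, MvPolynomial.coeff_sum]
  apply Finset.sum_congr rfl
  intro j _
  rw [← map_pow, mul_comm, MvPolynomial.coeff_C_mul, projC_coeff, mul_comm]

lemma projC_taylor {n : ℕ} (d0 : Fin n →₀ ℕ) (b : F)
    (q : Polynomial (MvPolynomial (Fin n) F)) :
    projC d0 (Polynomial.taylor (MvPolynomial.C b) q) = Polynomial.taylor b (projC d0 q) := by
  ext k
  rw [projC_coeff, Polynomial.taylor_coeff, Polynomial.taylor_coeff, projC_eval,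
    projC_hasseDeriv]

/-- Key commutation: translating then separating the first variable equals
separating, translating coefficientwise, and Taylor-shifting. -/
lemma key_comm {n : ℕ} (a : Fin n → F) (b : F) (R : MvPolynomial (Fin (n + 1)) F) :
    MvPolynomial.finSuccEquiv F n (trP (Fin.cons b a) R)
      = Polynomial.taylor (MvPolynomial.C b)
          (((MvPolynomial.finSuccEquiv F n) R).map (trP a)) := by
  rw [Polynomial.taylor_apply]
  have : (Polynomial.eval₂RingHom (Polynomial.C)
        (Polynomial.X + Polynomial.C (MvPolynomial.C b))).comp
        ((Polynomial.mapRingHom (trP a)).comp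
          (MvPolynomial.finSuccEquiv F n : MvPolynomial (Fin (n+1)) F →+* _))
      = (MvPolynomial.finSuccEquiv F n : MvPolynomial (Fin (n+1)) F →+* _).comp
          (trP (Fin.cons b a)) := by
    apply MvPolynomial.ringHom_ext
    · intro r
      simp [MvPolynomial.finSuccEquiv_apply]
    · intro k
      induction k using Fin.cases with
      | zero =>
        simp [MvPolynomial.finSuccEquiv_X_zero, MvPolynomial.finSuccEquiv_apply, add_comm]
      | succ j =>
        simp [MvPolynomial.finSuccEquiv_X_succ, MvPolynomial.finSuccEquiv_apply]
  have h := RingHom.congr_fun this R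
  simp only [RingHom.coe_comp, Function.comp_apply, coe_eval₂RingHom,
    Polynomial.coe_mapRingHom] at h
  rw [Polynomial.comp]
  exact h.symm

end MultCodeAux
end Part2
section Part3
open Polynomial
namespace MultCodeAux

variable {F : Type*} [Field F]

lemma taylor_coeff_rootMultiplicity_ne_zero (g : Polynomial F) (hg : g ≠ 0) (b : F) :
    (Polynomial.taylor b g).coeff (g.rootMultiplicity b) ≠ 0 := by
  set u := g.rootMultiplicity b with hu
  set h := g /ₘ (Polynomial.X - Polynomial.C b) ^ u with hh
  have hfac : (Polynomial.X - Polynomial.C b) ^ u * h = g := Polynomial.pow_mul_divByMonic_rootMultiplicity_eq g b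
  have heval : h.eval b ≠ 0 := Polynomial.eval_divByMonic_pow_rootMultiplicity_ne_zero b hg
  have hexp : Polynomial.taylor b g = Polynomial.X ^ u * Polynomial.taylor b h := by
    rw [← hfac]
    simp [Polynomial.taylor_apply, Polynomial.mul_comp, Polynomial.pow_comp,
      Polynomial.sub_comp, Polynomial.X_comp, Polynomial.C_comp]
  have hXu := Polynomial.coeff_X_pow_mul (Polynomial.taylor b h) u 0
  rw [zero_add] at hXu
  rw [hexp, hXu, Polynomial.taylor_coeff_zero]
  exact heval

lemma sum_min_rootMultiplicity_le [Fintype F] (g : Polynomial F) (hg : g ≠ 0) (s : ℕ) :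
    ∑ b : F, min s (g.rootMultiplicity b) ≤ g.natDegree := by
  classical
  calc ∑ b : F, min s (g.rootMultiplicity b) ≤ ∑ b : F, g.roots.count b := by
        apply Finset.sum_le_sum
        intro b _
        rw [Polynomial.count_roots]
        exact min_le_right _ _
    _ = ∑ b ∈ g.roots.toFinset, g.roots.count b := by
        symm
        apply Finset.sum_subset (Finset.subset_univ _)
        intro x _ hx
        exact Multiset.count_eq_zero.mpr (fun h => hx (Multiset.mem_toFinset.mpr h))
    _ = Multiset.card g.roots := Multiset.toFinset_sum_count_eq _
    _ ≤ g.natDegree := Polynomial.card_roots' g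

lemma line_bound [Fintype F] {n : ℕ} (s : ℕ) (R : MvPolynomial (Fin (n + 1)) F) (hR : R ≠ 0)
    (a : Fin n → F) :
    ∑ b : F, capMin s (trP (Fin.cons b a) R)
      ≤ Fintype.card F * capMin s (trP a (MvPolynomial.finSuccEquiv F n R).leadingCoeff)
        + (MvPolynomial.finSuccEquiv F n R).natDegree := by
  classical
  set p := MvPolynomial.finSuccEquiv F n R with hp_def
  have hp : p ≠ 0 := by
    rw [hp_def]
    exact (map_ne_zero_iff _ (MvPolynomial.finSuccEquiv F n).injective).mpr hR
  set t := p.natDegree with ht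
  set L := trP a p.leadingCoeff with hLdef
  have hL : L ≠ 0 := trP_ne_zero a (Polynomial.leadingCoeff_ne_zero.mpr hp)
  by_cases hcap : capMin s L = s
  · calc ∑ b : F, capMin s (trP (Fin.cons b a) R) ≤ ∑ _b : F, s :=
          Finset.sum_le_sum (fun b _ => capMin_le_s s _)
      _ = Fintype.card F * s := by rw [Finset.sum_const, Finset.card_univ, smul_eq_mul]
      _ ≤ _ := by rw [hcap]; exact Nat.le_add_right _ _
  · have hlt : capMin s L < s := lt_of_le_of_ne (capMin_le_s s L) hcap
    obtain ⟨d0, hd0mem, hd0wt⟩ := exists_le_of_capMin_lt hlt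
    set p' := p.map (trP a) with hp'def
    set g := projC d0 p' with hgdef
    have hgt : g.coeff t = MvPolynomial.coeff d0 L := by
      rw [hgdef, projC_coeff, hp'def, Polynomial.coeff_map]
      rfl
    have hg : g ≠ 0 := by
      intro h0
      rw [h0, Polynomial.coeff_zero] at hgt
      exact (MvPolynomial.mem_support_iff.mp hd0mem) hgt.symm
    have hgdeg : g.natDegree ≤ t :=
      le_trans (projC_natDegree_le d0 p') Polynomial.natDegree_map_le
    have hpoint : ∀ b : F, capMin s (trP (Fin.cons b a) R)
        ≤ capMin s L + min s (g.rootMultiplicity b) := by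
      intro b
      by_cases hu : s ≤ g.rootMultiplicity b
      · rw [min_eq_left hu]
        exact le_trans (capMin_le_s _ _) (Nat.le_add_left _ _)
      · set u := g.rootMultiplicity b with hudef
        have hmin : min s u = u := min_eq_right (le_of_not_ge hu)
        have hco : MvPolynomial.coeff (d0.cons u) (trP (Fin.cons b a) R)
            = (Polynomial.taylor b g).coeff u := by
          rw [← MvPolynomial.finSuccEquiv_coeff_coeff, key_comm, ← projC_coeff, projC_taylor]
        have hne : MvPolynomial.coeff (d0.cons u) (trP (Fin.cons b a) R) ≠ 0 := by
          rw [hco]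
          exact taylor_coeff_rootMultiplicity_ne_zero g hg b
        have hmem : (d0.cons u) ∈ (trP (Fin.cons b a) R).support :=
          MvPolynomial.mem_support_iff.mpr hne
        have hcm : capMin s (trP (Fin.cons b a) R) ≤ u + wtM d0 :=
          capMin_le_of_mem hmem (le_of_eq (wtM_cons u d0))
        rw [hmin]
        omega
    calc ∑ b : F, capMin s (trP (Fin.cons b a) R)
        ≤ ∑ b : F, (capMin s L + min s (g.rootMultiplicity b)) :=
          Finset.sum_le_sum (fun b _ => hpoint b)
      _ = Fintype.card F * capMin s L + ∑ b : F, min s (g.rootMultiplicity b) := by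
          rw [Finset.sum_add_distrib, Finset.sum_const, Finset.card_univ, smul_eq_mul]
      _ ≤ Fintype.card F * capMin s L + t :=
          Nat.add_le_add_left (le_trans (sum_min_rootMultiplicity_le g hg s) hgdeg) _

end MultCodeAux
end Part3
section Part4
open Polynomial
namespace MultCodeAux

variable {F : Type*} [Field F]

lemma totalDegree_fin_zero (P : MvPolynomial (Fin 0) F) : P.totalDegree = 0 := by
  apply Nat.eq_zero_of_le_zero
  rw [MvPolynomial.totalDegree]
  apply Finset.sup_le
  intro d _
  rw [Subsingleton.elim d 0]
  simp

theorem mainSZ [Fintype F] (s : ℕ) :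
    ∀ (n : ℕ) (R : MvPolynomial (Fin n) F), R ≠ 0 →
      ∑ a : Fin n → F, capMin s (trP a R)
        ≤ R.totalDegree * Fintype.card F ^ (n - 1) := by
  intro n
  induction n with
  | zero =>
    intro R hR
    have hz : ∀ a : Fin 0 → F, capMin s (trP a R) = 0 := by
      intro a
      have hne : (trP a R) ≠ 0 := trP_ne_zero a hR
      obtain ⟨d, hd⟩ := MvPolynomial.support_nonempty.mpr hne
      have hw : wtM d = 0 := by
        rw [Subsingleton.elim d 0]
        simp [wtM]
      exact Nat.le_zero.mp (capMin_le_of_mem hd (le_of_eq hw))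
    simp [hz]
  | succ n ih =>
    intro R hR
    set p := MvPolynomial.finSuccEquiv F n R with hp_def
    have hp : p ≠ 0 := (map_ne_zero_iff _ (MvPolynomial.finSuccEquiv F n).injective).mpr hR
    have hlead : p.leadingCoeff ≠ 0 := Polynomial.leadingCoeff_ne_zero.mpr hp
    have hdeg : p.leadingCoeff.totalDegree + p.natDegree ≤ R.totalDegree := by
      have h := MvPolynomial.totalDegree_coeff_finSuccEquiv_add_le R p.natDegree
        (by rw [← hp_def]; exact hlead)
      rw [← hp_def] at h
      exact h
    have hre : ∑ a : Fin (n + 1) → F, capMin s (trP a R)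
        = ∑ x : F × (Fin n → F), capMin s (trP (Fin.cons x.1 x.2) R) := by
      rw [← Equiv.sum_comp (Fin.consEquiv fun _ => F)
        (fun a => capMin s (trP a R))]
      rfl
    rw [hre, Fintype.sum_prod_type]
    have hswap : ∑ b : F, ∑ a : Fin n → F, capMin s (trP (Fin.cons b a) R)
        = ∑ a : Fin n → F, ∑ b : F, capMin s (trP (Fin.cons b a) R) :=
      Finset.sum_comm
    rw [hswap]
    calc ∑ a : Fin n → F, ∑ b : F, capMin s (trP (Fin.cons b a) R)
        ≤ ∑ a : Fin n → F, (Fintype.card F * capMin s (trP a p.leadingCoeff) + p.natDegree) :=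
          Finset.sum_le_sum (fun a _ => line_bound s R hR a)
      _ = Fintype.card F * (∑ a : Fin n → F, capMin s (trP a p.leadingCoeff))
            + p.natDegree * Fintype.card F ^ n := by
          rw [Finset.sum_add_distrib, Finset.sum_const, ← Finset.mul_sum, Finset.card_univ,
            smul_eq_mul, mul_comm (Fintype.card _), Fintype.card_fun, Fintype.card_fin]
          ring
      _ ≤ Fintype.card F * (p.leadingCoeff.totalDegree * Fintype.card F ^ (n - 1)) + p.natDegree * Fintype.card F ^ n := by
          exact Nat.add_le_add_right (Nat.mul_le_mul_left (Fintype.card F) (ih p.leadingCoeff hlead)) _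
      _ ≤ p.leadingCoeff.totalDegree * Fintype.card F ^ n + p.natDegree * Fintype.card F ^ n := by
          apply Nat.add_le_add_right
          cases n with
          | zero =>
            rw [totalDegree_fin_zero]
            simp
          | succ k =>
            apply le_of_eq
            rw [Nat.add_sub_cancel]
            ring
      _ = (p.leadingCoeff.totalDegree + p.natDegree) * Fintype.card F ^ n := by ring
      _ ≤ R.totalDegree * Fintype.card F ^ n := Nat.mul_le_mul_right _ hdeg
      _ = R.totalDegree * Fintype.card F ^ (n + 1 - 1) := by norm_num

lemma hasse_eval {n : ℕ} (a : Fin n → F) (i : Fin n → ℕ) (P : MvPolynomial (Fin n) F) :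
    MvPolynomial.eval a (mvHasseDeriv i P)
      = MvPolynomial.coeff (Finsupp.equivFunOnFinite.symm i) (trP a P) := by
  rw [mvHasseDeriv, ← MvPolynomial.coeff_map]
  congr 1
  have h : (MvPolynomial.map (MvPolynomial.eval a :
        MvPolynomial (Fin n) F →+* F)).comp
      (MvPolynomial.eval₂Hom (MvPolynomial.C.comp MvPolynomial.C)
        (fun k => MvPolynomial.C (MvPolynomial.X k) + MvPolynomial.X k))
      = trP a := by
    apply MvPolynomial.ringHom_ext
    · intro r
      simp
    · intro k
      simp
  exact RingHom.congr_fun h P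

lemma cond_capMin {m : ℕ} (s : ℕ) {P Q : MvPolynomial (Fin m) F} (a : Fin m → F)
    (hc : ∀ i : Fin m → ℕ, ∑ k, i k < s →
      MvPolynomial.eval a (mvHasseDeriv i P) = MvPolynomial.eval a (mvHasseDeriv i Q)) :
    capMin s (trP a (P - Q)) = s := by
  apply capMin_eq_of_forall
  intro d hd
  by_contra hlt
  push_neg at hlt
  apply MvPolynomial.mem_support_iff.mp hd
  have hi : ∑ k, d k < s := by
    rw [← wtM_eq_sum]
    exact hlt
  have heq := hc (⇑d) hi
  rw [hasse_eval, hasse_eval, Finsupp.equivFunOnFinite_symm_coe] at heq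
  rw [map_sub, MvPolynomial.coeff_sub]
  exact sub_eq_zero.mpr heq

end MultCodeAux
end Part4

open MultCodeAux in
theorem multiplicity_code_distance' {F : Type*} [Field F] [Fintype F] {m : ℕ} (d s : ℕ)
    (hs : 0 < s) (P Q : MvPolynomial (Fin m) F) (hPQ : P ≠ Q)
    (hP : P.totalDegree ≤ d) (hQ : Q.totalDegree ≤ d) :
    s * Nat.card {a : Fin m → F // ∀ i : Fin m → ℕ, ∑ k, i k < s →
        MvPolynomial.eval a (mvHasseDeriv i P) = MvPolynomial.eval a (mvHasseDeriv i Q)}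
      ≤ d * Fintype.card F ^ (m - 1) := by
  classical
  have hRne : P - Q ≠ 0 := sub_ne_zero.mpr hPQ
  have hRd : (P - Q).totalDegree ≤ d :=
    le_trans (MvPolynomial.totalDegree_sub P Q) (max_le hP hQ)
  set A := Finset.univ.filter (fun a : Fin m → F => ∀ i : Fin m → ℕ, ∑ k, i k < s →
      MvPolynomial.eval a (mvHasseDeriv i P) = MvPolynomial.eval a (mvHasseDeriv i Q)) with hA
  have hcard : Nat.card {a : Fin m → F // ∀ i : Fin m → ℕ, ∑ k, i k < s →
      MvPolynomial.eval a (mvHasseDeriv i P) = MvPolynomial.eval a (mvHasseDeriv i Q)}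
      = A.card := by
    rw [Nat.card_eq_fintype_card, Fintype.card_subtype]
  rw [hcard]
  calc s * A.card = ∑ _a ∈ A, s := by rw [Finset.sum_const, smul_eq_mul, mul_comm]
    _ = ∑ a ∈ A, capMin s (trP a (P - Q)) := by
        apply Finset.sum_congr rfl
        intro a ha
        exact (cond_capMin s a ((Finset.mem_filter.mp ha).2)).symm
    _ ≤ ∑ a : Fin m → F, capMin s (trP a (P - Q)) :=
        Finset.sum_le_sum_of_subset (Finset.subset_univ A)
    _ ≤ (P - Q).totalDegree * Fintype.card F ^ (m - 1) := mainSZ s m (P - Q) hRne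
    _ ≤ d * Fintype.card F ^ (m - 1) := Nat.mul_le_mul_right _ hRd

/-- **Distance of multiplicity codes.**
If `P ≠ Q` are `m`-variate polynomials of total degree at most `d` over the finite field `F_q`,
and `s > 0`, then `s ⬝ #{a ∈ F_q^m : P^{(<s)}(a) = Q^{(<s)}(a)} ≤ d ⬝ q^{m-1}`; equivalently, the
multiplicity code of order-`s` evaluations of degree-`d` polynomials has relative distance
at least `1 − d/(sq)`. -/

theorem multiplicity_code_distance {F : Type*} [Field F] [Fintype F] {m : ℕ} (d s : ℕ)
    (hs : 0 < s) (P Q : MvPolynomial (Fin m) F) (hPQ : P ≠ Q)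
    (hP : P.totalDegree ≤ d) (hQ : Q.totalDegree ≤ d) :
    s * Nat.card {a : Fin m → F // ∀ i : Fin m → ℕ, ∑ k, i k < s →
        MvPolynomial.eval a (mvHasseDeriv i P) = MvPolynomial.eval a (mvHasseDeriv i Q)}
      ≤ d * Fintype.card F ^ (m - 1) := by
  exact multiplicity_code_distance' d s hs P Q hPQ hP hQ
end

section
/- Let m, s, d, q be positive integers. Then, as real numbers, binom(d+m, m) / (binom(s+m−1, m)·q^m) ≥ (s/(m+s))^m · (d/(sq))^m ≥ (1 − m²/s)·(d/(sq))^m. (This is the lower bound on the rate of the multiplicity code of order-s evaluations of degree-d polynomials in m variables over F_q.) -/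
lemma asc_key (m s d : ℕ) (hd : 0 < d) :
    ∀ k, k ≤ m → s.ascFactorial k * d ^ k ≤ (d + 1).ascFactorial k * (m + s) ^ k := by
  intro k hk
  induction k with
  | zero => simp
  | succ n ih =>
    have hn : n ≤ m := Nat.le_of_succ_le hk
    have h1 : (s + n) * d ≤ (d + 1 + n) * (m + s) := by nlinarith [Nat.succ_le_of_lt (Nat.lt_of_succ_le hk)]
    calc s.ascFactorial (n + 1) * d ^ (n + 1)
        = ((s + n) * d) * (s.ascFactorial n * d ^ n) := by
          rw [Nat.ascFactorial_succ, pow_succ]; ring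
      _ ≤ ((d + 1 + n) * (m + s)) * ((d + 1).ascFactorial n * (m + s) ^ n) :=
          Nat.mul_le_mul h1 (ih hn)
      _ = (d + 1).ascFactorial (n + 1) * (m + s) ^ (n + 1) := by
          rw [Nat.ascFactorial_succ, pow_succ]; ring

lemma choose_key (m s d : ℕ) (hs : 0 < s) (hd : 0 < d) :
    (s + m - 1).choose m * d ^ m ≤ (d + m).choose m * (m + s) ^ m := by
  have h := asc_key m s d hd m le_rfl
  rw [Nat.ascFactorial_eq_factorial_mul_choose', Nat.ascFactorial_eq_factorial_mul_choose] at h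
  rw [mul_assoc, mul_assoc] at h
  exact Nat.le_of_mul_le_mul_left h (Nat.factorial_pos m)

/-- **Rate of multiplicity codes.**
For positive integers `m, s, d, q`:
`binom(d+m, m) / (binom(s+m−1, m)·q^m) ≥ (s/(m+s))^m · (d/(sq))^m ≥ (1 − m²/s)·(d/(sq))^m`. -/
theorem multiplicity_code_rate (m s d q : ℕ) (hm : 0 < m) (hs : 0 < s) (hd : 0 < d)
    (hq : 0 < q) :
    ((d + m).choose m : ℝ) / (((s + m - 1).choose m : ℝ) * (q : ℝ) ^ m)
        ≥ ((s : ℝ) / ((m : ℝ) + (s : ℝ))) ^ m * ((d : ℝ) / ((s : ℝ) * (q : ℝ))) ^ m ∧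
      ((s : ℝ) / ((m : ℝ) + (s : ℝ))) ^ m * ((d : ℝ) / ((s : ℝ) * (q : ℝ))) ^ m
        ≥ (1 - (m : ℝ) ^ 2 / (s : ℝ)) * ((d : ℝ) / ((s : ℝ) * (q : ℝ))) ^ m := by
  have hmR : (0 : ℝ) < m := by positivity
  have hsR : (0 : ℝ) < s := by positivity
  have hdR : (0 : ℝ) < d := by positivity
  have hqR : (0 : ℝ) < q := by positivity
  have hms : (0 : ℝ) < (m : ℝ) + s := by positivity
  constructor
  · -- first inequality
    have hB : 0 < (s + m - 1).choose m := by
      apply Nat.choose_pos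
      omega
    have hBR : (0 : ℝ) < ((s + m - 1).choose m : ℝ) := by exact_mod_cast hB
    have hkey : ((s + m - 1).choose m : ℝ) * (d : ℝ) ^ m
        ≤ ((d + m).choose m : ℝ) * ((m : ℝ) + s) ^ m := by
      have := choose_key m s d hs hd
      have := (Nat.cast_le (α := ℝ)).2 this
      push_cast at this
      convert this using 2 <;> push_cast <;> ring
    have hRHS : ((s : ℝ) / ((m : ℝ) + (s : ℝ))) ^ m * ((d : ℝ) / ((s : ℝ) * (q : ℝ))) ^ m
        = (d : ℝ) ^ m / (((m : ℝ) + s) ^ m * (q : ℝ) ^ m) := by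
      have h1 : (s : ℝ) / ((m : ℝ) + s) * ((d : ℝ) / ((s : ℝ) * q)) = (d : ℝ) / (((m : ℝ) + s) * (q : ℝ)) := by
        field_simp
      rw [← mul_pow, h1, div_pow, mul_pow]
    rw [ge_iff_le, hRHS, div_le_div_iff₀ (by positivity) (by positivity)]
    calc (d : ℝ) ^ m * (((s + m - 1).choose m : ℝ) * (q : ℝ) ^ m)
        = (((s + m - 1).choose m : ℝ) * (d : ℝ) ^ m) * (q : ℝ) ^ m := by ring
      _ ≤ (((d + m).choose m : ℝ) * ((m : ℝ) + s) ^ m) * (q : ℝ) ^ m := by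
          apply mul_le_mul_of_nonneg_right hkey (by positivity)
      _ = ((d + m).choose m : ℝ) * (((m : ℝ) + s) ^ m * (q : ℝ) ^ m) := by ring
  · -- second inequality
    have hpow : (0 : ℝ) ≤ ((d : ℝ) / ((s : ℝ) * (q : ℝ))) ^ m := by positivity
    apply mul_le_mul_of_nonneg_right _ hpow
    have hbern : 1 + (m : ℝ) * (-(m / ((m : ℝ) + s))) ≤ (1 + (-(m / ((m : ℝ) + s)))) ^ m := by
      apply one_add_mul_le_pow
      have : (m : ℝ) / ((m : ℝ) + s) ≤ 1 := by
        rw [div_le_one hms]; linarith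
      linarith
    have heq : (1 : ℝ) + (-(m / ((m : ℝ) + s))) = (s : ℝ) / ((m : ℝ) + s) := by
      field_simp
      ring
    rw [heq] at hbern
    have h2 : 1 - (m : ℝ) ^ 2 / s ≤ 1 + (m : ℝ) * (-(m / ((m : ℝ) + s))) := by
      have : (m : ℝ) ^ 2 / ((m : ℝ) + s) ≤ (m : ℝ) ^ 2 / s := by
        apply div_le_div_of_nonneg_left (by positivity) hsR (by linarith)
      have hrw : (m : ℝ) * (-(m / ((m : ℝ) + s))) = -((m : ℝ) ^ 2 / ((m : ℝ) + s)) := by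
        rw [mul_neg, ← mul_div_assoc, sq]
      rw [hrw]; linarith
    linarith
end

section
/- Let F be a field, let P ∈ F[X_1,...,X_m], let a ∈ F^m, and let j' be a nonnegative integer. Define the polynomial R(X) = Σ_{i' : wt(i') = j'} P^{(i')}(a)·X^{i'} ∈ F[X_1,...,X_m]. Then for every vector l of nonnegative integers, the l-th Hasse derivative of R satisfies R^{(l)}(X) = Σ_{i : wt(i) = j' − wt(l)} binom(l+i, l) · P^{(l+i)}(a) · X^i (the empty sum, i.e. 0, when wt(l) > j'). In particular, R^{(l)}(b) = Σ_{i : wt(i) = j' − wt(l)} binom(l+i, l) · P^{(l+i)}(a) · b^i for every b ∈ F^m. -/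
open MvPolynomial Finset


lemma mvHasseDeriv_sum {F : Type*} [CommSemiring F] {m : ℕ} (l : Fin m → ℕ)
    {X : Type*} (s : Finset X) (f : X → MvPolynomial (Fin m) F) :
    mvHasseDeriv l (∑ x ∈ s, f x) = ∑ x ∈ s, mvHasseDeriv l (f x) := by
  unfold mvHasseDeriv
  rw [show (MvPolynomial.eval₂ (MvPolynomial.C.comp MvPolynomial.C)
      (fun k => MvPolynomial.C (MvPolynomial.X k) + MvPolynomial.X k)
      (∑ x ∈ s, f x)) = ∑ x ∈ s, MvPolynomial.eval₂ (MvPolynomial.C.comp MvPolynomial.C)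
      (fun k => MvPolynomial.C (MvPolynomial.X k) + MvPolynomial.X k) (f x) from
    map_sum (MvPolynomial.eval₂Hom _ _) _ _, MvPolynomial.coeff_sum]

lemma symm_prod_pow {F : Type*} [CommSemiring F] {m : ℕ} (t : Fin m → ℕ) :
    MvPolynomial.monomial (σ := Fin m) (R := F) (Finsupp.equivFunOnFinite.symm t) 1 =
      ∏ k, MvPolynomial.X k ^ t k := by
  rw [MvPolynomial.monomial_eq, MvPolynomial.C_1, one_mul,
    Finsupp.prod_fintype _ _ (fun k => pow_zero _)]
  rfl

lemma mvHasseDeriv_monomial {F : Type*} [CommSemiring F] {m : ℕ} (l n : Fin m → ℕ) (c : F) :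
    mvHasseDeriv l (MvPolynomial.monomial (Finsupp.equivFunOnFinite.symm n) c) =
    if ∀ k, l k ≤ n k then
      MvPolynomial.monomial (Finsupp.equivFunOnFinite.symm (n - l))
        (((∏ k, (n k).choose (l k) : ℕ) : F) * c)
    else 0 := by
  unfold mvHasseDeriv
  rw [eval₂_monomial, Finsupp.prod_fintype _ _ (fun k => pow_zero _)]
  simp only [Finsupp.coe_equivFunOnFinite_symm]
  have hfactor : ∀ k : Fin m, (MvPolynomial.C (MvPolynomial.X k) + MvPolynomial.X k :
      MvPolynomial (Fin m) (MvPolynomial (Fin m) F)) ^ n k =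
      ∑ j ∈ Finset.range (n k + 1),
        MvPolynomial.C (((n k).choose j : MvPolynomial (Fin m) F) *
          MvPolynomial.X k ^ (n k - j)) * MvPolynomial.X k ^ j := by
    intro k
    rw [add_comm, add_pow]
    refine Finset.sum_congr rfl fun j hj => ?_
    rw [map_mul, map_pow, map_natCast]
    ring
  simp only [hfactor]
  rw [Finset.prod_univ_sum, RingHom.comp_apply, MvPolynomial.coeff_C_mul,
    MvPolynomial.coeff_sum]
  have hterm : ∀ t : Fin m → ℕ,
      MvPolynomial.coeff (Finsupp.equivFunOnFinite.symm l)
        (∏ k, MvPolynomial.C (((n k).choose (t k) : MvPolynomial (Fin m) F) *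
          MvPolynomial.X k ^ (n k - t k)) * MvPolynomial.X k ^ (t k))
      = if t = l then
          ((∏ k, (n k).choose (l k) : ℕ) : MvPolynomial (Fin m) F) *
            ∏ k, MvPolynomial.X k ^ (n k - l k)
        else 0 := by
    intro t
    rw [Finset.prod_mul_distrib, ← map_prod, MvPolynomial.coeff_C_mul, ← symm_prod_pow,
      MvPolynomial.coeff_monomial]
    simp only [EmbeddingLike.apply_eq_iff_eq, mul_ite, mul_one, mul_zero]
    split
    · next h => subst h; rw [Finset.prod_mul_distrib, Nat.cast_prod]
    · rfl
  simp only [hterm]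
  rw [Finset.sum_ite_eq' (Fintype.piFinset fun k => Finset.range (n k + 1)) l]
  have hmem : (l ∈ Fintype.piFinset fun k => Finset.range (n k + 1)) ↔ ∀ k, l k ≤ n k := by
    simp [Fintype.mem_piFinset, Nat.lt_succ_iff]
  rw [if_congr hmem rfl rfl, mul_ite, mul_zero]
  split
  · rw [MvPolynomial.monomial_eq, Finsupp.prod_fintype _ _ (fun k => pow_zero _)]
    simp only [Finsupp.coe_equivFunOnFinite_symm, Pi.sub_apply, map_mul, map_natCast]
    ring
  · rfl

/-- **Derivatives of the homogeneous Taylor-coefficient polynomial.**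
For `R(X) = ∑_{i' : wt(i') = j'} P^{(i')}(a)·X^{i'}`, the `l`-th Hasse derivative is
`R^{(l)}(X) = ∑_{i : wt(i) = j' − wt(l)} binom(l+i, l) · P^{(l+i)}(a) · X^i`
(the empty sum, i.e. `0`, when `wt(l) > j'`); in particular
`R^{(l)}(b) = ∑_{i : wt(i) = j' − wt(l)} binom(l+i, l) · P^{(l+i)}(a) · b^i` for all `b`. -/
theorem hasseDeriv_taylor_coefficient_poly {F : Type*} [Field F] {m : ℕ}
    (P : MvPolynomial (Fin m) F) (a : Fin m → F) (j' : ℕ)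
    (R : MvPolynomial (Fin m) F)
    (hR : R = ∑ i' ∈ Finset.Nat.antidiagonalTuple m j',
        MvPolynomial.C (MvPolynomial.eval a (mvHasseDeriv i' P)) *
          MvPolynomial.monomial (Finsupp.equivFunOnFinite.symm i') 1)
    (l : Fin m → ℕ) :
    (mvHasseDeriv l R =
      if (∑ k, l k) ≤ j' then
        ∑ i ∈ Finset.Nat.antidiagonalTuple m (j' - ∑ k, l k),
          MvPolynomial.C (((∏ k, (l k + i k).choose (l k) : ℕ) : F) *
              MvPolynomial.eval a (mvHasseDeriv (l + i) P)) *
            MvPolynomial.monomial (Finsupp.equivFunOnFinite.symm i) 1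
      else 0) ∧
    ∀ b : Fin m → F, MvPolynomial.eval b (mvHasseDeriv l R) =
      if (∑ k, l k) ≤ j' then
        ∑ i ∈ Finset.Nat.antidiagonalTuple m (j' - ∑ k, l k),
          ((∏ k, (l k + i k).choose (l k) : ℕ) : F) *
            MvPolynomial.eval a (mvHasseDeriv (l + i) P) * ∏ k, b k ^ i k
      else 0 := by
  have key : mvHasseDeriv l R =
      if (∑ k, l k) ≤ j' then
        ∑ i ∈ Finset.Nat.antidiagonalTuple m (j' - ∑ k, l k),
          MvPolynomial.C (((∏ k, (l k + i k).choose (l k) : ℕ) : F) *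
              MvPolynomial.eval a (mvHasseDeriv (l + i) P)) *
            MvPolynomial.monomial (Finsupp.equivFunOnFinite.symm i) 1
      else 0 := by
    rw [hR, mvHasseDeriv_sum]
    simp only [MvPolynomial.C_mul_monomial, mul_one, mvHasseDeriv_monomial]
    split
    · next h =>
      rw [← Finset.sum_filter]
      refine Finset.sum_nbij' (fun i' => i' - l) (fun i => l + i) ?_ ?_ ?_ ?_ ?_
      · intro i' hi'
        rw [Finset.mem_filter, Finset.Nat.mem_antidiagonalTuple] at hi'
        rw [Finset.Nat.mem_antidiagonalTuple]
        simp only [Pi.sub_apply]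
        rw [Finset.sum_tsub_distrib _ (fun k _ => hi'.2 k), hi'.1]
      · intro i hi
        rw [Finset.Nat.mem_antidiagonalTuple] at hi
        rw [Finset.mem_filter, Finset.Nat.mem_antidiagonalTuple]
        refine ⟨?_, fun k => le_add_right (le_refl (l k))⟩
        simp only [Pi.add_apply]
        rw [Finset.sum_add_distrib, hi, Nat.add_sub_cancel' h]
      · intro i' hi'
        rw [Finset.mem_filter] at hi'
        funext k
        exact Nat.add_sub_cancel' (hi'.2 k)
      · intro i _
        funext k
        simp [Nat.add_sub_cancel_left]
      · intro i' hi'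
        rw [Finset.mem_filter] at hi'
        have h2 : ∀ k, l k + (i' - l) k = i' k := fun k => Nat.add_sub_cancel' (hi'.2 k)
        have h1 : l + (i' - l) = i' := funext h2
        simp only [h1, h2]
    · next h =>
      refine Finset.sum_eq_zero fun i' hi' => ?_
      rw [Finset.Nat.mem_antidiagonalTuple] at hi'
      rw [if_neg]
      intro hle
      exact h (hi' ▸ Finset.sum_le_sum fun k _ => hle k)
  refine ⟨key, fun b => ?_⟩
  rw [key]
  split
  · rw [map_sum]
    refine Finset.sum_congr rfl fun i _ => ?_
    rw [MvPolynomial.C_mul_monomial, mul_one, MvPolynomial.eval_monomial,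
      Finsupp.prod_fintype _ _ (fun k => pow_zero _)]
    simp only [Finsupp.coe_equivFunOnFinite_symm]
  · rw [map_zero]
end

section
/- Let F be a field, let m ≥ 2, and let c and j' be nonnegative integers with (m−1)·j' < m·c. Let R ∈ F[X_1,...,X_m] be a homogeneous polynomial of degree j'. Suppose B is a set of m linearly independent vectors in F^m such that R vanishes with multiplicity at least c at every b ∈ B. Then R = 0. -/
namespace HVBaux

open MvPolynomial

variable {F : Type*} [CommSemiring F] {m : ℕ}

/-- The shift substitution `P(X) ↦ P(X + a)`. -/
noncomputable def shiftHom (a : Fin m → F) :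
    MvPolynomial (Fin m) F →ₐ[F] MvPolynomial (Fin m) F :=
  aeval (fun j => X j + C (a j))

lemma shiftHom_apply (a : Fin m → F) (P : MvPolynomial (Fin m) F) :
    shiftHom a P = eval₂ C (fun j => X j + C (a j)) P := by
  rw [shiftHom, aeval_def, algebraMap_eq]

lemma degree_eq_sum (i : Fin m →₀ ℕ) : i.degree = ∑ k, i k :=
  Finset.sum_subset (Finset.subset_univ _)
    (fun x _ hx => Finsupp.notMem_support_iff.mp hx)

lemma eval_mvHasseDeriv (a : Fin m → F) (i : Fin m → ℕ) (P : MvPolynomial (Fin m) F) :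
    MvPolynomial.eval a (mvHasseDeriv i P)
      = coeff (Finsupp.equivFunOnFinite.symm i) (shiftHom a P) := by
  unfold mvHasseDeriv
  rw [← coeff_map, shiftHom_apply]
  congr 1
  rw [eval₂_comp_left (MvPolynomial.map (eval a))]
  congr 1
  · ext r
    simp
  · funext k
    simp [add_comm]

lemma coeff_shift_eq_zero_of_mult {P : MvPolynomial (Fin m) F} {a : Fin m → F} {c : ℕ}
    (h : (c : ℕ∞) ≤ mvMult P a) (i : Fin m →₀ ℕ) (hi : i.degree < c) :
    coeff i (shiftHom a P) = 0 := by
  have h2 : ((i.degree : ℕ∞)) < mvMult P a :=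
    lt_of_lt_of_le (by exact_mod_cast hi) h
  rw [mvMult] at h2
  obtain ⟨M, hM, hlt⟩ := lt_sSup_iff.mp h2
  have h3 := hM (i : Fin m → ℕ) (by rwa [← degree_eq_sum])
  rwa [eval_mvHasseDeriv, Finsupp.equivFunOnFinite_symm_coe] at h3

lemma coeff_aeval_eq_zero {g : Fin m → MvPolynomial (Fin m) F}
    (hg : ∀ j, (g j).IsHomogeneous 1) {Q : MvPolynomial (Fin m) F} {c : ℕ}
    (hQ : ∀ i : Fin m →₀ ℕ, i.degree < c → coeff i Q = 0)
    (i : Fin m →₀ ℕ) (hi : i.degree < c) : coeff i (aeval g Q) = 0 := by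
  conv_lhs => rw [← sum_homogeneousComponent Q]
  rw [map_sum, coeff_sum]
  apply Finset.sum_eq_zero
  intro t _
  by_cases htc : i.degree = t
  · have hzero : homogeneousComponent t Q = 0 := by
      ext d
      rw [coeff_homogeneousComponent, coeff_zero]
      split
      · next hd => exact hQ d (by omega)
      · rfl
    simp [hzero]
  · have hhom : (aeval g (homogeneousComponent t Q)).IsHomogeneous (1 * t) :=
      (homogeneousComponent_isHomogeneous t Q).aeval g hg
    exact hhom.coeff_eq_zero (by simpa using htc)

/-- Setting `X k := 0` after shifting by `e_k` is the same as setting `X k := 1`. -/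
lemma zero_comp_shift (k : Fin m) :
    (aeval (fun j => if j = k then 0 else X j) :
        MvPolynomial (Fin m) F →ₐ[F] MvPolynomial (Fin m) F).comp
      (shiftHom (Pi.single k 1)) =
    aeval (fun j => if j = k then (1 : MvPolynomial (Fin m) F) else X j) := by
  apply MvPolynomial.algHom_ext
  intro j
  simp only [AlgHom.comp_apply, shiftHom, aeval_X, map_add, aeval_C]
  by_cases hj : j = k <;> simp [hj, Pi.single_apply, algebraMap_eq]

lemma coeff_zero_subst (k : Fin m) (P : MvPolynomial (Fin m) F)
    {i : Fin m →₀ ℕ} (hik : i k = 0) :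
    coeff i (aeval (fun j => if j = k then 0 else X j) P) = coeff i P := by
  conv_lhs => rw [P.as_sum]
  rw [map_sum, coeff_sum]
  have hterm : ∀ ν : Fin m →₀ ℕ,
      coeff i (aeval (fun j => if j = k then (0 : MvPolynomial (Fin m) F) else X j)
        (monomial ν (coeff ν P))) = if ν = i then coeff ν P else 0 := by
    intro ν
    rw [aeval_monomial]
    by_cases hνk : ν k = 0
    · have hprod : (ν.prod fun j e => (if j = k then (0 : MvPolynomial (Fin m) F) else X j) ^ e)
          = ν.prod fun j e => X j ^ e := by
        apply Finset.prod_congr rfl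
        intro j hj
        have : j ≠ k := fun h => by
          subst h; exact (Finsupp.mem_support_iff.mp hj) hνk
        simp [this]
      rw [hprod, algebraMap_eq, ← monomial_eq, coeff_monomial]
    · have hk : k ∈ ν.support := Finsupp.mem_support_iff.mpr hνk
      have hprod : (ν.prod fun j e => (if j = k then (0 : MvPolynomial (Fin m) F) else X j) ^ e)
          = 0 := Finset.prod_eq_zero hk (by simp [zero_pow hνk])
      rw [hprod, mul_zero]
      have hνi : ν ≠ i := fun h => hνk (h ▸ hik)
      simp [hνi]
  rw [Finset.sum_congr rfl (fun ν _ => hterm ν), Finset.sum_ite_eq' P.support i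
    (fun ν => coeff ν P)]
  split
  · rfl
  · next h => exact (notMem_support_iff.mp h).symm

lemma one_subst_monomial (k : Fin m) (ν : Fin m →₀ ℕ) (r : F) :
    aeval (fun j => if j = k then (1 : MvPolynomial (Fin m) F) else X j) (monomial ν r)
      = monomial (ν.erase k) r := by
  rw [aeval_monomial]
  have h1 : (ν.prod fun j e => (if j = k then (1 : MvPolynomial (Fin m) F) else X j) ^ e)
      = ∏ j ∈ ν.support.erase k, X j ^ ν j := by
    rw [Finsupp.prod]
    rw [← Finset.prod_erase ν.support (f := fun j =>
      (if j = k then (1 : MvPolynomial (Fin m) F) else X j) ^ ν j) (a := k) (by simp)]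
    apply Finset.prod_congr rfl
    intro j hj
    simp [Finset.ne_of_mem_erase hj]
  have h2 : ((ν.erase k).prod fun j e => (X j : MvPolynomial (Fin m) F) ^ e)
      = ∏ j ∈ ν.support.erase k, X j ^ ν j := by
    rw [Finsupp.prod, Finsupp.support_erase]
    apply Finset.prod_congr rfl
    intro j hj
    rw [Finsupp.erase_ne (Finset.ne_of_mem_erase hj)]
  rw [h1, ← h2, algebraMap_eq, ← monomial_eq]

lemma degree_add' (f g : Fin m →₀ ℕ) : (f + g).degree = f.degree + g.degree := by
  simp [degree_eq_sum, Finset.sum_add_distrib]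

lemma degree_single' (k : Fin m) (n : ℕ) : (Finsupp.single k n).degree = n := by
  simp [degree_eq_sum, Finsupp.single_apply]

lemma degree_erase_add (ν : Fin m →₀ ℕ) (k : Fin m) :
    (ν.erase k).degree + ν k = ν.degree := by
  conv_rhs => rw [← Finsupp.erase_add_single k ν]
  rw [degree_add', degree_single']

end HVBaux

open Matrix MvPolynomial HVBaux in
/-- **Vanishing of low-degree homogeneous polynomials with high multiplicity at a basis.**
If `m ≥ 2`, `(m−1)·j' < m·c`, `R` is homogeneous of degree `j'`, and `R` vanishes with
multiplicity at least `c` at each of `m` linearly independent vectors, then `R = 0`. -/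
theorem homogeneous_vanishing_on_basis {F : Type*} [Field F] {m : ℕ} (hm : 2 ≤ m)
    (c j' : ℕ) (hcj : (m - 1) * j' < m * c)
    (R : MvPolynomial (Fin m) F) (hR : R.IsHomogeneous j')
    (b : Fin m → Fin m → F) (hb : LinearIndependent F b)
    (hmult : ∀ k, (c : ℕ∞) ≤ mvMult R (b k)) :
    R = 0 := by
  classical
  set M : Matrix (Fin m) (Fin m) F := Matrix.of b with hM
  have hMu : IsUnit Mᵀ := by
    rw [Matrix.isUnit_transpose]
    exact Matrix.linearIndependent_rows_iff_isUnit.mp hb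
  set N : Matrix (Fin m) (Fin m) F := (Mᵀ)⁻¹ with hNdef
  have hMN : Mᵀ * N = 1 := Matrix.mul_nonsing_inv _ ((Matrix.isUnit_iff_isUnit_det _).mp hMu)
  set g : Fin m → MvPolynomial (Fin m) F := fun j => ∑ l, C (b l j) * X l with hgdef
  set g' : Fin m → MvPolynomial (Fin m) F := fun j => ∑ l, C (N j l) * X l with hg'def
  have hghom : ∀ j, (g j).IsHomogeneous 1 := by
    intro j
    apply IsHomogeneous.sum
    intro l _
    simpa using isHomogeneous_C_mul_X_pow (b l j) l 1
  set S : MvPolynomial (Fin m) F := aeval g R with hSdef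
  have hShom : S.IsHomogeneous j' := by
    have := hR.aeval g hghom; rwa [one_mul] at this
  -- commuting shifts with the substitution
  have hshift : ∀ k : Fin m,
      shiftHom (Pi.single k 1) S = aeval g (shiftHom (b k) R) := by
    intro k
    have hcomp : (shiftHom (Pi.single k 1)).comp
          (aeval g : MvPolynomial (Fin m) F →ₐ[F] MvPolynomial (Fin m) F)
        = (aeval g : MvPolynomial (Fin m) F →ₐ[F] MvPolynomial (Fin m) F).comp
          (shiftHom (b k)) := by
      apply MvPolynomial.algHom_ext
      intro j
      simp only [AlgHom.comp_apply, shiftHom, aeval_X, hgdef, map_add, map_sum,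
        _root_.map_mul, aeval_C, algebraMap_eq, mul_add, Finset.sum_add_distrib]
      congr 1
      simp [Pi.single_apply, apply_ite C, mul_ite, Finset.sum_ite_eq']
    calc shiftHom (Pi.single k 1) S
        = ((shiftHom (Pi.single k 1)).comp
            (aeval g : MvPolynomial (Fin m) F →ₐ[F] MvPolynomial (Fin m) F)) R := rfl
      _ = aeval g (shiftHom (b k) R) := by rw [hcomp]; rfl
  have hSzero : ∀ k : Fin m, ∀ i : Fin m →₀ ℕ, i.degree < c →
      MvPolynomial.coeff i (shiftHom (Pi.single k 1) S) = 0 := by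
    intro k i hi
    rw [hshift k]
    exact coeff_aeval_eq_zero hghom
      (fun i' hi' => coeff_shift_eq_zero_of_mult (hmult k) i' hi') i hi
  -- S = 0
  have hS0 : S = 0 := by
    by_contra hS0
    obtain ⟨ν, hν⟩ := MvPolynomial.ne_zero_iff.mp hS0
    have hνmem : ν ∈ S.support := MvPolynomial.mem_support_iff.mpr hν
    have hνd : ν.degree = j' := by
      have := hShom hν
      rw [Finsupp.degree_eq_weight_one]; exact this
    have hkey : ∀ k : Fin m, c + ν k ≤ j' := by
      intro k
      have hcoe : MvPolynomial.coeff (ν.erase k) (shiftHom (Pi.single k 1) S)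
          = MvPolynomial.coeff ν S := by
        have h1 := (coeff_zero_subst k (shiftHom (Pi.single k 1) S)
          (i := ν.erase k) (by simp)).symm
        rw [h1, ← AlgHom.comp_apply, zero_comp_shift k]
        conv_lhs => rw [S.as_sum, map_sum, coeff_sum]
        rw [Finset.sum_congr rfl (fun ν' _ => by rw [one_subst_monomial])]
        rw [Finset.sum_eq_single ν]
        · rw [coeff_monomial, if_pos rfl]
        · intro ν' hν' hne
          rw [coeff_monomial]
          rw [if_neg]
          intro heq
          apply hne
          have hd' : ν'.degree = j' := by
            have := hShom (MvPolynomial.mem_support_iff.mp hν')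
            rw [Finsupp.degree_eq_weight_one]; exact this
          have hkk : ν' k = ν k := by
            have e1 := degree_erase_add ν k
            have e2 := degree_erase_add ν' k
            rw [heq] at e2
            omega
          calc ν' = ν'.erase k + Finsupp.single k (ν' k) :=
                (Finsupp.erase_add_single k ν').symm
            _ = ν.erase k + Finsupp.single k (ν k) := by rw [heq, hkk]
            _ = ν := Finsupp.erase_add_single k ν
        · intro hno
          exact absurd hνmem hno
      have hge : ¬ (ν.erase k).degree < c := by
        intro hlt
        exact hν (hcoe ▸ hSzero k (ν.erase k) hlt)
      have := degree_erase_add ν k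
      omega
    have hsum : ∑ _k : Fin m, (c : ℕ) + ∑ k, ν k ≤ ∑ _k : Fin m, j' := by
      rw [← Finset.sum_add_distrib]
      exact Finset.sum_le_sum fun k _ => hkey k
    rw [← degree_eq_sum, hνd] at hsum
    simp only [Finset.sum_const, Finset.card_univ, Fintype.card_fin, smul_eq_mul] at hsum
    rw [Nat.sub_mul, one_mul] at hcj
    have hmj : m * c + j' ≤ m * j' := hsum
    generalize m * c = A at hcj hmj
    generalize m * j' = B at hcj hmj
    omega
  -- recover R
  have hid : (aeval g' : MvPolynomial (Fin m) F →ₐ[F] MvPolynomial (Fin m) F).comp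
      (aeval g : MvPolynomial (Fin m) F →ₐ[F] MvPolynomial (Fin m) F) = AlgHom.id F _ := by
    apply MvPolynomial.algHom_ext
    intro j
    simp only [AlgHom.comp_apply, aeval_X, hgdef, hg'def, AlgHom.id_apply, map_sum,
      _root_.map_mul, aeval_C, algebraMap_eq, aeval_X, Finset.mul_sum]
    calc ∑ l, ∑ t, C (b l j) * (C (N l t) * X t)
        = ∑ t, ∑ l, C (b l j * N l t) * X t := by
          rw [Finset.sum_comm]
          exact Finset.sum_congr rfl fun t _ => Finset.sum_congr rfl fun l _ => by
            rw [C_mul, mul_assoc]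
      _ = ∑ t, C (∑ l, b l j * N l t) * X t := by
          exact Finset.sum_congr rfl fun t _ => by
            rw [map_sum C, Finset.sum_mul]
      _ = ∑ t, C ((Mᵀ * N) j t) * X t := by
          exact Finset.sum_congr rfl fun t _ => by
            rw [Matrix.mul_apply]
            simp [hM, Matrix.transpose_apply]
      _ = X j := by
          rw [hMN]
          simp [Matrix.one_apply, apply_ite C, ite_mul]
  have hRS : R = aeval g' S := by
    rw [hSdef, ← AlgHom.comp_apply, hid, AlgHom.id_apply]
  rw [hRS, hS0, map_zero]
end

section
/- Let F be a field, let m ≥ 2, let c be a nonnegative integer, let a ∈ F^m, and let P ∈ F[X_1,...,X_m]. Let B ⊆ F^m be a basis of F^m over F. Suppose that for every b ∈ B and every vector l of nonnegative integers with wt(l) < c, the univariate polynomial P^{(l)}(a + b·T) ∈ F[T] is identically zero. Then (m−1)·mult(P, a) ≥ m·c; in particular P vanishes at a with multiplicity at least c·m/(m−1). -/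
set_option maxHeartbeats 1000000
set_option synthInstance.maxHeartbeats 400000

open MvPolynomial

namespace MAmp

variable {F : Type*} [Field F] {m : ℕ}

noncomputable def E (P : MvPolynomial (Fin m) F) :
    MvPolynomial (Fin m) (MvPolynomial (Fin m) F) :=
  MvPolynomial.eval₂ (MvPolynomial.C.comp MvPolynomial.C)
    (fun k => MvPolynomial.C (MvPolynomial.X k) + MvPolynomial.X k) P

lemma eval_zero_coeff_E (S : MvPolynomial (Fin m) F) (d : Fin m →₀ ℕ) :
    eval (0 : Fin m → F) (coeff d (E S)) = coeff d S := by
  have h : MvPolynomial.map (MvPolynomial.eval (0 : Fin m → F)) (E S) = S := by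
    rw [E, eval₂_comp_left (MvPolynomial.map (MvPolynomial.eval (0 : Fin m → F)))]
    refine Eq.trans ?_ (eval₂_eta S)
    congr 1
    · ext r; simp
    · funext k; simp
  rw [← coeff_map, h]

/-- substitution `X_{k'} ↦ t_{k'} + ∑ k W_{k,k'} X_k` (affine map). -/
noncomputable def psi (t : Fin m → F) (W : Fin m → Fin m → F) : Fin m → MvPolynomial (Fin m) F :=
  fun k' => C (t k') + ∑ k, C (W k k') * X k

/-- the linear part. -/
noncomputable def wlin (W : Fin m → Fin m → F) : Fin m → MvPolynomial (Fin m) F :=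
  fun k' => ∑ k, C (W k k') * X k

noncomputable def Phi (t : Fin m → F) (W : Fin m → Fin m → F) :
    MvPolynomial (Fin m) (MvPolynomial (Fin m) F) →+* MvPolynomial (Fin m) (MvPolynomial (Fin m) F) :=
  eval₂Hom ((MvPolynomial.C : MvPolynomial (Fin m) F →+* _).comp
      ((aeval (psi t W)).toRingHom : MvPolynomial (Fin m) F →+* MvPolynomial (Fin m) F))
    (fun k' => MvPolynomial.map (MvPolynomial.C : F →+* MvPolynomial (Fin m) F) (wlin W k'))

lemma E_psi (t : Fin m → F) (W : Fin m → Fin m → F) (S : MvPolynomial (Fin m) F) :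
    E (aeval (psi t W) S) = Phi t W (E S) := by
  have h1 : E (aeval (psi t W) S) =
      eval₂ (MvPolynomial.C.comp MvPolynomial.C)
        (fun k' => MvPolynomial.C (psi t W k') + MvPolynomial.map MvPolynomial.C (wlin W k')) S := by
    rw [E, aeval_def, algebraMap_eq,
      show (eval₂ (MvPolynomial.C.comp MvPolynomial.C)
          (fun k => MvPolynomial.C (MvPolynomial.X k) + MvPolynomial.X k)
          (eval₂ MvPolynomial.C (psi t W) S)) =
        (eval₂Hom (MvPolynomial.C.comp MvPolynomial.C)
          (fun k => MvPolynomial.C (MvPolynomial.X k) + MvPolynomial.X k))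
          (eval₂ MvPolynomial.C (psi t W) S) from rfl,
      eval₂_comp_left]
    congr 1
    · ext r; simp
    · funext k'
      simp only [Function.comp, psi, wlin, map_add, map_sum, map_mul, coe_eval₂Hom, eval₂_C,
        eval₂_X, RingHom.coe_comp, map_X, map_C]
      simp [mul_add, Finset.sum_add_distrib, add_assoc]
  have h2 : Phi t W (E S) =
      eval₂ (MvPolynomial.C.comp MvPolynomial.C)
        (fun k' => MvPolynomial.C (psi t W k') + MvPolynomial.map MvPolynomial.C (wlin W k')) S := by
    rw [E, Phi, eval₂_comp_left]
    congr 1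
    · ext r; simp
    · funext k'
      simp only [Function.comp, map_add, coe_eval₂Hom, eval₂_C, eval₂_X, RingHom.coe_comp,
        AlgHom.toRingHom_eq_coe, AlgHom.coe_toRingHom, aeval_X]
  rw [h1, h2]
lemma master (t : Fin m → F) (W : Fin m → Fin m → F) (S : MvPolynomial (Fin m) F)
    (i : Fin m →₀ ℕ) :
    coeff i (E (aeval (psi t W) S)) =
      ∑ j ∈ (E S).support,
        aeval (psi t W) (coeff j (E S)) *
          MvPolynomial.C (coeff i (j.prod fun k' n => (wlin W k') ^ n)) := by
  rw [E_psi]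
  conv_lhs => rw [as_sum (E S)]
  rw [map_sum, coeff_sum]
  refine Finset.sum_congr rfl fun j _ => ?_
  rw [Phi, eval₂Hom_monomial]
  simp only [RingHom.coe_comp, Function.comp_apply, AlgHom.toRingHom_eq_coe,
    AlgHom.coe_toRingHom]
  rw [show (j.prod fun k' n => (MvPolynomial.map (MvPolynomial.C : F →+* MvPolynomial (Fin m) F)
        (wlin W k')) ^ n) =
      MvPolynomial.map (MvPolynomial.C : F →+* MvPolynomial (Fin m) F)
        (j.prod fun k' n => (wlin W k') ^ n) by
    rw [Finsupp.prod, Finsupp.prod, map_prod]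
    exact Finset.prod_congr rfl fun k' _ => (map_pow _ _ _).symm]
  rw [coeff_C_mul, coeff_map]

lemma coeff_wpow_eq_zero (W : Fin m → Fin m → F) (i j : Fin m →₀ ℕ)
    (hij : i.degree ≠ j.degree) :
    coeff i (j.prod fun k' n => (wlin W k') ^ n) = 0 := by
  have hw : ∀ k', (wlin W k' : MvPolynomial (Fin m) F).IsHomogeneous 1 := fun k' =>
    IsHomogeneous.sum _ _ _ fun k _ => isHomogeneous_C_mul_X _ _
  have h : (j.prod fun k' n => (wlin W k') ^ n).IsHomogeneous j.degree := by
    rw [Finsupp.prod, Finsupp.degree]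
    exact IsHomogeneous.prod _ _ _ fun k' _ => by simpa using (hw k').pow (j k')
  exact h.coeff_eq_zero hij
noncomputable def tauf (k : Fin m) : Fin m → Polynomial F :=
  fun k' => if k' = k then Polynomial.X else 0

noncomputable def Xi (k : Fin m) :
    MvPolynomial (Fin m) F →+* MvPolynomial (Fin m) (Polynomial F) :=
  eval₂Hom (MvPolynomial.C.comp Polynomial.C)
    (fun k' => MvPolynomial.C (if k' = k then Polynomial.X else 0) + MvPolynomial.X k')

lemma Xi_C (k : Fin m) (r : F) :
    Xi k (MvPolynomial.C r) = MvPolynomial.C (Polynomial.C r) := by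
  rw [Xi, eval₂Hom_C]; rfl

lemma Xi_X_self (k : Fin m) :
    Xi k (MvPolynomial.X k : MvPolynomial (Fin m) F) =
      MvPolynomial.C Polynomial.X + MvPolynomial.X k := by
  rw [Xi, eval₂Hom_X', if_pos rfl]

lemma Xi_X_ne (k k' : Fin m) (h : ¬ k' = k) :
    Xi k (MvPolynomial.X k' : MvPolynomial (Fin m) F) = MvPolynomial.X k' := by
  rw [Xi, eval₂Hom_X', if_neg h, map_zero, zero_add]

lemma tau_coeff_E (k : Fin m) (S : MvPolynomial (Fin m) F) (l : Fin m →₀ ℕ) :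
    aeval (tauf k) (coeff l (E S)) = coeff l (Xi k S) := by
  have h : MvPolynomial.map ((aeval (tauf k)).toRingHom :
      MvPolynomial (Fin m) F →+* Polynomial F) (E S) = Xi k S := by
    rw [E, eval₂_comp_left, Xi]
    congr 1
    · ext r
      simp [tauf, algebraMap_eq]
    · funext k'
      simp [tauf]
  rw [← h, coeff_map]
  rfl

lemma coeff_Xi (k : Fin m) (S : MvPolynomial (Fin m) F) :
    ∀ (l : Fin m →₀ ℕ), l k = 0 → ∀ n : ℕ,
      Polynomial.coeff (coeff l (Xi k S)) n = coeff (l + Finsupp.single k n) S := by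
  induction S using MvPolynomial.induction_on with
  | C a =>
    intro l hl n
    rw [Xi_C, coeff_C, coeff_C]
    by_cases hl0 : l = 0
    · subst hl0
      by_cases hn : n = 0
      · subst hn; simp
      · simp [hn, Finsupp.single_eq_zero, Polynomial.coeff_C, eq_comm]
    · have h2 : ¬ (0 = l + Finsupp.single k n) := by
        intro hc
        exact hl0 ((Finsupp.add_eq_zero_iff l (Finsupp.single k n)).mp hc.symm).1
      rw [if_neg (fun hc => hl0 hc.symm), if_neg h2]
      simp
  | add p q hp hq =>
    intro l hl n
    rw [RingHom.map_add, coeff_add, Polynomial.coeff_add, coeff_add, hp l hl n, hq l hl n]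
  | mul_X p k'' hp =>
    intro l hl n
    rw [RingHom.map_mul]
    by_cases hkk : k'' = k
    · subst hkk
      rw [Xi_X_self, mul_add, coeff_add, coeff_mul_X']
      have hknot : k'' ∉ l.support := by simp [Finsupp.notMem_support_iff, hl]
      rw [if_neg hknot]
      rw [show (Xi k'' p * MvPolynomial.C Polynomial.X) =
        MvPolynomial.C Polynomial.X * Xi k'' p by ring, coeff_C_mul]
      cases n with
      | zero =>
        rw [Polynomial.coeff_add]
        simp only [Polynomial.coeff_zero, add_zero]
        rw [Polynomial.mul_coeff_zero]
        simp only [Polynomial.coeff_X_zero, zero_mul]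
        rw [coeff_mul_X']
        have h3 : k'' ∉ (l + Finsupp.single k'' 0).support := by
          simp [Finsupp.notMem_support_iff, hl]
        rw [if_neg h3]
      | succ n' =>
        rw [Polynomial.coeff_add]
        simp only [Polynomial.coeff_zero, add_zero]
        rw [Polynomial.coeff_X_mul]
        rw [coeff_mul_X']
        have hmem : k'' ∈ (l + Finsupp.single k'' (n' + 1)).support := by
          simp [Finsupp.mem_support_iff, hl]
        rw [if_pos hmem]
        rw [show l + Finsupp.single k'' (n' + 1) - Finsupp.single k'' 1 =
            l + Finsupp.single k'' n' by
          ext j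
          simp only [Finsupp.coe_tsub, Pi.sub_apply, Finsupp.add_apply, Finsupp.single_apply]
          split <;> omega]
        exact hp l hl n'
    · rw [Xi_X_ne k k'' hkk]
      rw [coeff_mul_X', coeff_mul_X']
      by_cases hmem : k'' ∈ l.support
      · have hmem' : k'' ∈ (l + Finsupp.single k n).support := by
          simp only [Finsupp.mem_support_iff, Finsupp.add_apply, Finsupp.single_apply,
            if_neg (fun hc : k = k'' => hkk hc.symm)] at *
          omega
        rw [if_pos hmem, if_pos hmem']
        have hsub : (l - Finsupp.single k'' 1 : Fin m →₀ ℕ) k = 0 := by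
          simp only [Finsupp.coe_tsub, Pi.sub_apply, Finsupp.single_apply, hl]
          omega
        rw [hp (l - Finsupp.single k'' 1) hsub n]
        congr 1
        have hge : 1 ≤ l k'' := by
          simpa [Finsupp.mem_support_iff, Nat.one_le_iff_ne_zero] using hmem
        ext j
        simp only [Finsupp.coe_tsub, Pi.sub_apply, Finsupp.add_apply, Finsupp.single_apply]
        by_cases hj1 : k'' = j <;> by_cases hj2 : k = j <;> simp [hj1, hj2] <;> omega
      · have hmem' : k'' ∉ (l + Finsupp.single k n).support := by
          simp only [Finsupp.mem_support_iff, Finsupp.add_apply, Finsupp.single_apply,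
            if_neg (fun hc : k = k'' => hkk hc.symm)] at *
          omega
        rw [if_neg hmem, if_neg hmem']
        simp
lemma wt_eq_degree (d : Fin m →₀ ℕ) : Finsupp.degree d = ∑ k, d k := by
  rw [Finsupp.degree]
  exact Finset.sum_subset (Finset.subset_univ _)
    (fun x _ hx => Finsupp.notMem_support_iff.mp hx)

/-- tau after psi is the line substitution. -/
lemma tau_psi (a : Fin m → F) (B : Fin m → Fin m → F) (k : Fin m)
    (S : MvPolynomial (Fin m) F) :
    aeval (tauf k) (aeval (psi a (fun k k' => B k k')) S) =
      aeval (fun k' => Polynomial.C (a k') + Polynomial.C (B k k') * Polynomial.X) S := by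
  rw [comp_aeval_apply]
  have hfg : (fun k' => aeval (tauf k) (psi a (fun k k' => B k k') k')) =
      fun k' => Polynomial.C (a k') + Polynomial.C (B k k') * Polynomial.X := by
    funext k'
    simp only [psi, map_add, map_sum, map_mul, aeval_C, aeval_X, tauf, Polynomial.algebraMap_eq]
    simp [mul_ite, mul_zero, Finset.sum_ite_eq']
  rw [hfg]

section Inverse

variable (a : Fin m → F) (B : Module.Basis (Fin m) F (Fin m → F))

/-- inverse linear coefficients -/
noncomputable def Ninv (k' j : Fin m) : F :=
  B.repr (fun i => if j = i then (1:F) else 0) k'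

noncomputable def tinv (k' : Fin m) : F := -(B.repr a k')

noncomputable def psiInv : Fin m → MvPolynomial (Fin m) F :=
  psi (tinv a B) (fun k k' => Ninv B k' k)

lemma psiInv_comp (k' : Fin m) :
    aeval (psiInv a B) (psi a (fun k k'' => B k k'') k') = MvPolynomial.X k' := by
  have hBrepr : ∀ v : Fin m → F, ∑ k, B.repr v k * B k k' = v k' := by
    intro v
    have hv := B.sum_repr v
    calc ∑ k, B.repr v k * B k k' = (∑ k, B.repr v k • B k) k' := by
          rw [Finset.sum_apply]; simp [Pi.smul_apply, smul_eq_mul]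
      _ = v k' := by rw [hv]
  simp only [psi, psiInv, map_add, map_sum, map_mul, aeval_C, aeval_X, algebraMap_eq]
  have hterm : ∀ k, (MvPolynomial.C (B k k') * (MvPolynomial.C (tinv a B k)
      + ∑ j, MvPolynomial.C (Ninv B k j) * MvPolynomial.X j)) =
      (MvPolynomial.C (B k k' * tinv a B k)
        + ∑ j, MvPolynomial.C (B k k' * Ninv B k j) * MvPolynomial.X j) := by
    intro k
    rw [mul_add, Finset.mul_sum, map_mul]
    exact congrArg _ (Finset.sum_congr rfl fun j _ => by rw [← mul_assoc, ← map_mul])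
  simp only [hterm]
  rw [Finset.sum_add_distrib, ← map_sum, Finset.sum_comm]
  have h1 : ∑ k, B k k' * tinv a B k = -(a k') := by
    simp only [tinv, mul_neg]
    rw [Finset.sum_neg_distrib, neg_inj]
    rw [Finset.sum_congr rfl fun k _ => mul_comm (B k k') (B.repr a k)]
    exact hBrepr a
  have h2 : ∀ j, ∑ k, B k k' * Ninv B k j = if j = k' then 1 else 0 := by
    intro j
    rw [Finset.sum_congr rfl fun k _ => mul_comm (B k k') (Ninv B k j)]
    simp only [Ninv]
    exact hBrepr (fun i => if j = i then (1:F) else 0)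
  have hterm2 : ∀ j : Fin m, (∑ k, MvPolynomial.C (B k k' * Ninv B k j) * MvPolynomial.X j)
      = MvPolynomial.C (∑ k, B k k' * Ninv B k j) * MvPolynomial.X j := by
    intro j
    rw [map_sum, Finset.sum_mul]
  simp only [hterm2, h2]
  rw [h1]
  simp [Finset.sum_ite_eq', apply_ite MvPolynomial.C]

lemma psiInv_point (k : Fin m) : eval a (psiInv a B k) = 0 := by
  have ha : B.repr a k = ∑ j, a j * Ninv B k j := by
    conv_lhs => rw [pi_eq_sum_univ a]
    rw [map_sum, Finsupp.coe_finset_sum, Finset.sum_apply]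
    refine Finset.sum_congr rfl fun j _ => ?_
    rw [map_smul, Ninv]
    simp [smul_eq_mul]
  simp only [psiInv, psi, map_add, map_sum, map_mul, eval_C, eval_X, tinv]
  rw [ha]
  ring_nf
  simp [mul_comm]

end Inverse
lemma coeff_E_hasse (j : Fin m →₀ ℕ) (P : MvPolynomial (Fin m) F) :
    coeff j (E P) = mvHasseDeriv (⇑j) P := by
  rw [mvHasseDeriv, Finsupp.equivFunOnFinite_symm_coe]
  rfl

lemma psiInv_id (a : Fin m → F) (B : Module.Basis (Fin m) F (Fin m → F)) (S : MvPolynomial (Fin m) F) :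
    aeval (psiInv a B) (aeval (psi a (fun k k' => B k k')) S) = S := by
  rw [comp_aeval_apply]
  have hfg : (fun k' => aeval (psiInv a B) (psi a (fun k k'' => B k k'') k')) =
      (MvPolynomial.X : Fin m → MvPolynomial (Fin m) F) := by
    funext k'
    exact psiInv_comp a B k'
  rw [hfg, aeval_X_left_apply]

lemma eval_eq_aeval' (g : Fin m → F) (Q : MvPolynomial (Fin m) F) : eval g Q = aeval g Q := by
  rw [← coe_aeval_eq_eval]; rfl

lemma eval_a_psiInv (a : Fin m → F) (B : Module.Basis (Fin m) F (Fin m → F))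
    (Q : MvPolynomial (Fin m) F) :
    eval a (aeval (psiInv a B) Q) = eval (0 : Fin m → F) Q := by
  rw [eval_eq_aeval', comp_aeval_apply]
  have hfg : (fun k => aeval (R := F) a (psiInv a B k)) = (0 : Fin m → F) := by
    funext k
    rw [← eval_eq_aeval']
    exact psiInv_point a B k
  rw [hfg, ← eval_eq_aeval']

lemma claimA (a : Fin m → F) (B : Module.Basis (Fin m) F (Fin m → F)) (c : ℕ)
    (P : MvPolynomial (Fin m) F)
    (h : ∀ k : Fin m, ∀ l : Fin m → ℕ, ∑ j, l j < c →
      MvPolynomial.aeval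
          (fun k' => Polynomial.C (a k') + Polynomial.C (B k k') * Polynomial.X)
          (mvHasseDeriv l P) = (0 : Polynomial F))
    (k : Fin m) (l : Fin m →₀ ℕ) (hlk : l k = 0) (hdeg : Finsupp.degree l < c) (n : ℕ) :
    coeff (l + Finsupp.single k n) (aeval (psi a (fun k k' => B k k')) P) = 0 := by
  rw [← coeff_Xi k (aeval (psi a (fun k k' => B k k')) P) l hlk n, ← tau_coeff_E, master, map_sum]
  rw [Finset.sum_eq_zero, Polynomial.coeff_zero]
  intro j _
  rw [map_mul]
  by_cases hdegj : Finsupp.degree l = Finsupp.degree j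
  · rw [tau_psi, coeff_E_hasse]
    rw [h k (⇑j) (by rw [← wt_eq_degree, ← hdegj]; exact hdeg), zero_mul]
  · rw [coeff_wpow_eq_zero _ l j hdegj, map_zero, map_zero, mul_zero]
end MAmp

/-- **Multiplicity amplification from lines through a point.**
If `m ≥ 2`, `B` is a basis of `F^m`, and for every `b ∈ B` and every `l` with `wt(l) < c` the
univariate polynomial `P^{(l)}(a + b·T)` vanishes identically, then
`(m−1)·mult(P, a) ≥ m·c`, i.e. `P` vanishes at `a` with multiplicity at least `c·m/(m−1)`. -/
theorem multiplicity_amplification {F : Type*} [Field F] {m : ℕ} (hm : 2 ≤ m)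
    (c : ℕ) (a : Fin m → F) (P : MvPolynomial (Fin m) F)
    (B : Module.Basis (Fin m) F (Fin m → F))
    (h : ∀ k : Fin m, ∀ l : Fin m → ℕ, ∑ j, l j < c →
      MvPolynomial.aeval
          (fun k' => Polynomial.C (a k') + Polynomial.C (B k k') * Polynomial.X)
          (mvHasseDeriv l P) = (0 : Polynomial F)) :
    ((m * c : ℕ) : ℕ∞) ≤ ((m - 1 : ℕ) : ℕ∞) * mvMult P a := by
  classical
  open MvPolynomial MAmp in
  have hD1 : 1 ≤ m - 1 := by omega
  set M := (c * m + (m - 1 - 1)) / (m - 1) with hM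
  -- ceiling division facts
  have hlowhigh : c * m ≤ (m - 1) * M ∧ (m - 1) * M ≤ c * m + (m - 1 - 1) := by
    have heq := Nat.div_add_mod (c * m + (m - 1 - 1)) (m - 1)
    have hlt := Nat.mod_lt (c * m + (m - 1 - 1)) (show 0 < m - 1 by omega)
    rw [← hM] at heq
    generalize hr : (c * m + (m - 1 - 1)) % (m - 1) = r at heq hlt
    generalize hdm : (m - 1) * M = A at heq ⊢
    generalize hcm : c * m = CM at heq ⊢
    omega
  obtain ⟨hlow, hhigh⟩ := hlowhigh
  -- Claim B : all coefficients of R of weight < M vanish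
  have claimB : ∀ e : Fin m →₀ ℕ, Finsupp.degree e < M →
      MvPolynomial.coeff e (MvPolynomial.aeval (MAmp.psi a (fun k k' => B k k')) P) = 0 := by
    intro e he
    obtain ⟨k, -, hk⟩ := Finset.exists_max_image Finset.univ (fun j => e j)
      ⟨⟨0, by omega⟩, Finset.mem_univ _⟩
    have hdec : e = (e - Finsupp.single k (e k)) + Finsupp.single k (e k) := by
      ext j
      simp only [Finsupp.add_apply, Finsupp.coe_tsub, Pi.sub_apply, Finsupp.single_apply]
      split
      · rename_i hkj; subst hkj; omega
      · omega
    have hlk : (e - Finsupp.single k (e k) : Fin m →₀ ℕ) k = 0 := by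
      simp [Finsupp.single_apply]
    have hdegsum : Finsupp.degree e = Finsupp.degree (e - Finsupp.single k (e k)) + e k := by
      rw [MAmp.wt_eq_degree, MAmp.wt_eq_degree]
      have hpt : ∀ j : Fin m, e j =
          (e - Finsupp.single k (e k) : Fin m →₀ ℕ) j + (if k = j then e k else 0) := by
        intro j
        simp only [Finsupp.coe_tsub, Pi.sub_apply, Finsupp.single_apply]
        split
        · rename_i hkj; subst hkj; omega
        · omega
      rw [Finset.sum_congr rfl fun j _ => hpt j, Finset.sum_add_distrib]
      simp
    have hwl : Finsupp.degree (e - Finsupp.single k (e k)) < c := by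
      -- arithmetic
      have hsum : Finsupp.degree e ≤ m * e k := by
        rw [MAmp.wt_eq_degree]
        calc ∑ j, e j ≤ ∑ _j : Fin m, e k := Finset.sum_le_sum fun j _ => hk j (Finset.mem_univ j)
          _ = m * e k := by simp [Finset.sum_const, mul_comm]
      by_contra hcon
      push_neg at hcon
      have h1 : m * c ≤ m * Finsupp.degree (e - Finsupp.single k (e k)) :=
        Nat.mul_le_mul_left m hcon
      have h2 : m * Finsupp.degree (e - Finsupp.single k (e k)) + m * e k
          = m * Finsupp.degree e := by rw [← Nat.mul_add, ← hdegsum]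
      have h3 : (m - 1) * Finsupp.degree e + Finsupp.degree e = m * Finsupp.degree e := by
        have : (m - 1) + 1 = m := by omega
        calc (m - 1) * Finsupp.degree e + Finsupp.degree e
            = ((m - 1) + 1) * Finsupp.degree e := by rw [Nat.add_mul, one_mul]
          _ = m * Finsupp.degree e := by rw [this]
      have h4 : (m - 1) * Finsupp.degree e + (m - 1) ≤ (m - 1) * M := by
        have : (m - 1) * (Finsupp.degree e + 1) ≤ (m - 1) * M :=
          Nat.mul_le_mul_left (m - 1) (by omega)
        rw [Nat.mul_add, mul_one] at this
        exact this
      have h5 : m * c = c * m := Nat.mul_comm m c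
      generalize hq1 : m * c = q1 at h1 h5
      generalize hq2 : m * Finsupp.degree (e - Finsupp.single k (e k)) = q2 at h1 h2
      generalize hq3 : m * e k = q3 at h2 hsum
      generalize hq4 : m * Finsupp.degree e = q4 at h2 h3
      generalize hq5 : (m - 1) * Finsupp.degree e = q5 at h3 h4
      generalize hq6 : (m - 1) * M = q6 at h4 hlow hhigh
      generalize hq7 : c * m = q7 at h5 hlow hhigh
      omega
    rw [hdec]
    exact MAmp.claimA a B c P h k _ hlk hwl (e k)
  -- membership in the multiplicity set
  have hMem : (M : ℕ∞) ∈ {M' : ℕ∞ | ∀ i : Fin m → ℕ, ((∑ k, i k : ℕ) : ℕ∞) < M' →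
      MvPolynomial.eval a (mvHasseDeriv i P) = 0} := by
    intro i hi
    have hi' : ∑ k, i k < M := by exact_mod_cast hi
    have hdeg : Finsupp.degree (Finsupp.equivFunOnFinite.symm i) < M := by
      rw [MAmp.wt_eq_degree]
      exact hi'
    have hPR : P = MvPolynomial.aeval (MAmp.psiInv a B)
        (MvPolynomial.aeval (MAmp.psi a (fun k k' => B k k')) P) :=
      (MAmp.psiInv_id a B P).symm
    have hstep : mvHasseDeriv i P =
        MvPolynomial.coeff (Finsupp.equivFunOnFinite.symm i) (MAmp.E P) := rfl
    rw [hstep]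
    conv_lhs => rw [hPR]
    have master' := MAmp.master (MAmp.tinv a B) (fun k k' => MAmp.Ninv B k' k)
      (MvPolynomial.aeval (MAmp.psi a (fun k k' => B k k')) P)
      (Finsupp.equivFunOnFinite.symm i)
    rw [show MAmp.psi (MAmp.tinv a B) (fun k k' => MAmp.Ninv B k' k) = MAmp.psiInv a B
      from rfl] at master'
    rw [master', map_sum]
    refine Finset.sum_eq_zero fun j _ => ?_
    rw [map_mul]
    by_cases hdegj : (Finsupp.equivFunOnFinite.symm i).degree = Finsupp.degree j
    · rw [MAmp.eval_a_psiInv, MAmp.eval_zero_coeff_E,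
        claimB j (by rw [← hdegj]; exact hdeg), zero_mul]
    · rw [MAmp.coeff_wpow_eq_zero _ _ j hdegj, map_zero, map_zero, mul_zero]
  -- conclude
  calc ((m * c : ℕ) : ℕ∞) ≤ (((m - 1) * M : ℕ) : ℕ∞) :=
        Nat.cast_le.mpr (Nat.mul_comm c m ▸ hlow)
    _ = ((m - 1 : ℕ) : ℕ∞) * (M : ℕ∞) := by push_cast; ring
    _ ≤ ((m - 1 : ℕ) : ℕ∞) * mvMult P a := by
        rw [mvMult]
        exact mul_le_mul_right (le_sSup hMem) _
end
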